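/- arXiv:1208.4090 — 7 statements merged into one kernel-verified Lean document; each statement's English description precedes it below -/
import Mathlib

section
/- If η : ℤ → A is a bi-infinite word over a finite alphabet A and there exists n ≥ 1 such that the number of distinct factors of length n in η is at most n, then η is periodic: there exists m ≥ 1 with η(x + m) = η(x) for all x ∈ ℤ. -/
open Set

private def MHfac {A : Type*} (η : ℤ → A) (k : ℕ) : ℤ → (Fin k → A) :=
  fun m i => η (m + (i : ℤ))

private lemma MHstep {A : Type*} [Finite A] (η : ℤ → A) (k : ℕ)
    (hP : (Set.range (MHfac η (k+1))).ncard ≤ (Set.range (MHfac η k)).ncard)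
    {m m' : ℤ} (h : MHfac η k m = MHfac η k m') :
    MHfac η (k+1) m = MHfac η (k+1) m' := by
  set r : (Fin (k+1) → A) → (Fin k → A) := fun w i => w i.castSucc with hrdef
  have hr : r ∘ MHfac η (k+1) = MHfac η k := by
    funext m i
    simp [MHfac, r]
  have himg : r '' Set.range (MHfac η (k+1)) = Set.range (MHfac η k) := by
    rw [← Set.range_comp, hr]
  have hcard : (r '' Set.range (MHfac η (k+1))).ncard
      = (Set.range (MHfac η (k+1))).ncard := by
    have h1 := Set.ncard_image_le (f := r) (s := Set.range (MHfac η (k+1)))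
      (Set.toFinite _)
    rw [himg] at *
    omega
  have hinj := Set.injOn_of_ncard_image_eq hcard (Set.toFinite _)
  apply hinj (Set.mem_range_self m) (Set.mem_range_self m')
  have : r (MHfac η (k+1) m) = MHfac η k m := congrFun hr m
  have : r (MHfac η (k+1) m') = MHfac η k m' := congrFun hr m'
  simp only [show r (MHfac η (k+1) m) = MHfac η k m from congrFun hr m,
    show r (MHfac η (k+1) m') = MHfac η k m' from congrFun hr m', h]

private lemma MHstep' {A : Type*} [Finite A] (η : ℤ → A) (k : ℕ)
    (hP : (Set.range (MHfac η (k+1))).ncard ≤ (Set.range (MHfac η k)).ncard)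
    {m m' : ℤ} (h : MHfac η k (m+1) = MHfac η k (m'+1)) :
    MHfac η (k+1) m = MHfac η (k+1) m' := by
  set l : (Fin (k+1) → A) → (Fin k → A) := fun w i => w i.succ with hldef
  have hl : l ∘ MHfac η (k+1) = fun m => MHfac η k (m+1) := by
    funext m i
    simp only [Function.comp_apply, MHfac, l, Fin.val_succ]
    push_cast
    ring_nf
  have himg : l '' Set.range (MHfac η (k+1)) = Set.range (MHfac η k) := by
    rw [← Set.range_comp, hl]
    ext w
    constructor
    · rintro ⟨m, rfl⟩; exact ⟨m+1, rfl⟩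
    · rintro ⟨m, rfl⟩; exact ⟨m-1, by simp⟩
  have hcard : (l '' Set.range (MHfac η (k+1))).ncard
      = (Set.range (MHfac η (k+1))).ncard := by
    have h1 := Set.ncard_image_le (f := l) (s := Set.range (MHfac η (k+1)))
      (Set.toFinite _)
    rw [himg] at *
    omega
  have hinj := Set.injOn_of_ncard_image_eq hcard (Set.toFinite _)
  apply hinj (Set.mem_range_self m) (Set.mem_range_self m')
  simp only [show l (MHfac η (k+1) m) = MHfac η k (m+1) from congrFun hl m,
    show l (MHfac η (k+1) m') = MHfac η k (m'+1) from congrFun hl m', h]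

private lemma MHextract_left {A : Type*} (η : ℤ → A) (k : ℕ) {m m' : ℤ}
    (h : MHfac η (k+1) m = MHfac η (k+1) m') : MHfac η k m = MHfac η k m' := by
  funext i
  have := congrFun h i.castSucc
  simpa [MHfac] using this

private lemma MHextract_right {A : Type*} (η : ℤ → A) (k : ℕ) {m m' : ℤ}
    (h : MHfac η (k+1) m = MHfac η (k+1) m') :
    MHfac η k (m+1) = MHfac η k (m'+1) := by
  funext i
  have := congrFun h i.succ
  simp only [MHfac, Fin.val_succ] at this ⊢
  push_cast at this ⊢
  convert this using 2 <;> ring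

/-- monotonicity of complexity -/
private lemma MHmono {A : Type*} [Finite A] (η : ℤ → A) (k : ℕ) :
    (Set.range (MHfac η k)).ncard ≤ (Set.range (MHfac η (k+1))).ncard := by
  set r : (Fin (k+1) → A) → (Fin k → A) := fun w i => w i.castSucc with hrdef
  have hr : r ∘ MHfac η (k+1) = MHfac η k := by
    funext m i; simp [MHfac, r]
  have himg : r '' Set.range (MHfac η (k+1)) = Set.range (MHfac η k) := by
    rw [← Set.range_comp, hr]
  calc (Set.range (MHfac η k)).ncard = (r '' Set.range (MHfac η (k+1))).ncard := by
        rw [himg]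
    _ ≤ _ := Set.ncard_image_le (Set.toFinite _)

/-- **Morse–Hedlund theorem over `ℤ`.** If for some `n ≥ 1` the number of
distinct factors of length `n` of `η : ℤ → A` is at most `n`, then `η` is
periodic. -/
theorem morse_hedlund_int {A : Type*} [Finite A] (η : ℤ → A)
    (h : ∃ n : ℕ, 1 ≤ n ∧
      (Set.range fun m : ℤ => fun i : Fin n => η (m + (i : ℤ))).ncard ≤ n) :
    ∃ m : ℤ, 1 ≤ m ∧ ∀ x : ℤ, η (x + m) = η x := by
  obtain ⟨n, hn1, hn⟩ := h
  by_cases hconst : ∀ x y : ℤ, η x = η y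
  · exact ⟨1, le_refl 1, fun x => hconst _ _⟩
  push_neg at hconst
  obtain ⟨x₀, y₀, hxy⟩ := hconst
  -- complexity at 1 is ≥ 2
  have hP1 : 2 ≤ (Set.range (MHfac η 1)).ncard := by
    have hmem1 : MHfac η 1 x₀ ∈ Set.range (MHfac η 1) := Set.mem_range_self _
    have hmem2 : MHfac η 1 y₀ ∈ Set.range (MHfac η 1) := Set.mem_range_self _
    have hne : MHfac η 1 x₀ ≠ MHfac η 1 y₀ := by
      intro hcontra
      have := congrFun hcontra 0
      simp [MHfac] at this
      exact hxy this
    exact Set.one_lt_ncard_iff (Set.toFinite _) |>.2 ⟨_, _, hmem1, hmem2, hne⟩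
  -- find k with P(k+1) ≤ P(k)
  have hk : ∃ k : ℕ, (Set.range (MHfac η (k+1))).ncard ≤ (Set.range (MHfac η k)).ncard := by
    by_contra hcon
    push_neg at hcon
    have key : ∀ j : ℕ, j + 2 ≤ (Set.range (MHfac η (j+1))).ncard := by
      intro j
      induction j with
      | zero => simpa using hP1
      | succ j ih =>
        have := hcon (j+1)
        omega
    have hnn : (Set.range (MHfac η n)).ncard ≤ n := hn
    obtain ⟨j, rfl⟩ : ∃ j, n = j + 1 := ⟨n - 1, by omega⟩
    have := key j
    omega
  obtain ⟨k, hPk⟩ := hk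
  -- k ≥ 1? if k = 0 then range (MHfac η 1) ≤ range (MHfac η 0) = 1, contradiction with hP1
  have hk1 : 1 ≤ k := by
    by_contra hk0
    interval_cases k
    have h0 : (Set.range (MHfac η 0)).ncard ≤ 1 := by
      apply Set.ncard_le_one_iff_eq (Set.toFinite _) |>.2
      right
      refine ⟨MHfac η 0 0, ?_⟩
      ext w
      simp only [Set.mem_range, Set.mem_singleton_iff]
      constructor
      · rintro ⟨m, rfl⟩; funext i; exact absurd i.2 (by omega)
      · rintro rfl; exact ⟨0, rfl⟩
    have hPk' : (Set.range (MHfac η 1)).ncard ≤ (Set.range (MHfac η 0)).ncard := hPk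
    omega
  -- forward and backward determinism
  have fwd : ∀ m m' : ℤ, MHfac η k m = MHfac η k m' →
      MHfac η k (m+1) = MHfac η k (m'+1) := fun m m' h =>
    MHextract_right η k (MHstep η k hPk h)
  have bwd : ∀ m m' : ℤ, MHfac η k m = MHfac η k m' →
      MHfac η k (m-1) = MHfac η k (m'-1) := by
    intro m m' h
    have := MHstep' η k hPk (m := m - 1) (m' := m' - 1) (by simpa using h)
    exact MHextract_left η k this
  -- pigeonhole: ∃ a b : ℕ, a ≠ b, MHfac η k a = MHfac η k b
  have : ∃ a b : ℕ, a ≠ b ∧ MHfac η k (a : ℤ) = MHfac η k (b : ℤ) := by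
    have : ¬ Function.Injective (fun a : ℕ => MHfac η k (a : ℤ)) := by
      intro hinj
      haveI : Infinite (Fin k → A) := Infinite.of_injective _ hinj
      exact not_finite (Fin k → A)
    simp only [Function.Injective, not_forall] at this
    obtain ⟨a, b, hab, hne⟩ := this
    exact ⟨a, b, fun hc => hne (by rw [hc]), hab⟩
  obtain ⟨a, b, hab, heq⟩ := this
  have key : ∀ (a b : ℤ), a < b → MHfac η k a = MHfac η k b →
      ∃ m : ℤ, 1 ≤ m ∧ ∀ x : ℤ, η (x + m) = η x := by
    intro a b hab heq
    refine ⟨b - a, by omega, ?_⟩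
    have main : ∀ m : ℤ, MHfac η k (m + (b - a)) = MHfac η k m := by
      intro m
      refine Int.inductionOn' m a ?_ ?_ ?_
      · rw [show a + (b - a) = b by ring]; exact heq.symm
      · intro m _ hm
        rw [show (m+1) + (b - a) = (m + (b - a)) + 1 by ring]
        exact fwd _ _ hm
      · intro m _ hm
        rw [show (m-1) + (b - a) = (m + (b - a)) - 1 by ring]
        exact bwd _ _ hm
    intro x
    have := congrFun (main x) ⟨0, hk1⟩
    simpa [MHfac] using this
  rcases lt_or_gt_of_ne hab with hlt | hlt
  · exact key a b (by exact_mod_cast hlt) heq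
  · exact key b a (by exact_mod_cast hlt) heq.symm
end

section
/- If f : ℕ → A is a one-sided infinite word over a finite alphabet and there exists n₀ ≥ 1 with P_f(n₀) ≤ n₀, then the restriction of f to {x : x > n₀} is periodic with period at most n₀. -/
open Set

private def mhW {A : Type*} (f : ℕ → A) (n m : ℕ) : Fin n → A := fun i => f (m + i)

private noncomputable def mhP {A : Type*} (f : ℕ → A) (n : ℕ) : ℕ := (Set.range (mhW f n)).ncard

private lemma mh_comp {A : Type*} (f : ℕ → A) (n : ℕ) :
    (fun w : Fin (n+1) → A => w ∘ Fin.castSucc) ∘ mhW f (n+1) = mhW f n := by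
  funext m i
  simp [mhW]

private lemma mh_image {A : Type*} (f : ℕ → A) (n : ℕ) :
    (fun w : Fin (n+1) → A => w ∘ Fin.castSucc) '' Set.range (mhW f (n+1))
      = Set.range (mhW f n) := by
  rw [← Set.range_comp, mh_comp]

private lemma mh_mono {A : Type*} [Finite A] (f : ℕ → A) (n : ℕ) :
    mhP f n ≤ mhP f (n+1) := by
  unfold mhP
  rw [← mh_image f n]
  exact Set.ncard_image_le (Set.toFinite _)

private lemma mh_mono' {A : Type*} [Finite A] (f : ℕ → A) {a b : ℕ} (hab : a ≤ b) :
    mhP f a ≤ mhP f b := by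
  induction b with
  | zero => simp [Nat.le_zero.mp hab]
  | succ b ih =>
    rcases Nat.lt_or_ge a (b+1) with h | h
    · exact le_trans (ih (by omega)) (mh_mono f b)
    · have : a = b + 1 := by omega
      simp [this]

/-- If complexity does not grow from n to n+1, equal n-windows force equal next letters. -/
private lemma mh_key {A : Type*} [Finite A] (f : ℕ → A) (n : ℕ)
    (h : mhP f (n+1) ≤ mhP f n)
    {m m' : ℕ} (hw : mhW f n m = mhW f n m') : f (m + n) = f (m' + n) := by
  have hinj : Set.InjOn (fun w : Fin (n+1) → A => w ∘ Fin.castSucc)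
      (Set.range (mhW f (n+1))) := by
    apply Set.injOn_of_ncard_image_eq _ (Set.toFinite _)
    rw [mh_image]
    exact le_antisymm (mh_mono f n) h
  have h1 : mhW f (n+1) m = mhW f (n+1) m' := by
    apply hinj (Set.mem_range_self m) (Set.mem_range_self m')
    calc (mhW f (n+1) m) ∘ Fin.castSucc = mhW f n m := congrFun (mh_comp f n) m
      _ = mhW f n m' := hw
      _ = (mhW f (n+1) m') ∘ Fin.castSucc := (congrFun (mh_comp f n) m').symm
  have := congrFun h1 (Fin.last n)
  simpa [mhW, Fin.last] using this

private lemma mh_prop {A : Type*} [Finite A] (f : ℕ → A) (n : ℕ)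
    (h : mhP f (n+1) ≤ mhP f n)
    {m m' : ℕ} (hw : mhW f n m = mhW f n m') (k : ℕ) :
    mhW f n (m + k) = mhW f n (m' + k) := by
  induction k with
  | zero => simpa using hw
  | succ k ih =>
    have hnext : f (m + k + n) = f (m' + k + n) := mh_key f n h ih
    funext i
    rcases lt_or_eq_of_le (Nat.succ_le_of_lt i.2) with hi | hi
    · have := congrFun ih ⟨i.1 + 1, hi⟩
      simp only [mhW] at this ⊢
      convert this using 2 <;> omega
    · simp only [mhW]
      have e1 : m + (k + 1) + i.1 = m + k + n := by omega
      have e2 : m' + (k + 1) + i.1 = m' + k + n := by omega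
      rw [e1, e2]; exact hnext

/-- **Morse–Hedlund theorem over `ℕ`.** If `P_f(n₀) ≤ n₀` for some `n₀ ≥ 1`,
then the restriction of `f` to `{x : x > n₀}` is periodic with period at most
`n₀`. -/
theorem morse_hedlund_nat {A : Type*} [Finite A] (f : ℕ → A) (n₀ : ℕ) (hn₀ : 1 ≤ n₀)
    (hP : (Set.range fun m : ℕ => fun i : Fin n₀ => f (m + (i : ℕ))).ncard ≤ n₀) :
    ∃ p : ℕ, 1 ≤ p ∧ p ≤ n₀ ∧ ∀ x : ℕ, n₀ < x → f (x + p) = f x := by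
  have hPn₀ : mhP f n₀ ≤ n₀ := hP
  have hP1 : 1 ≤ mhP f 1 := by
    have h1 : (Set.range (mhW f 1)).Nonempty := ⟨mhW f 1 0, Set.mem_range_self 0⟩
    exact (Set.ncard_pos (Set.toFinite _)).mpr h1
  -- find n with 1 ≤ n ≤ n₀ and mhP f (n+1) ≤ mhP f n
  have hex : ∃ n, 1 ≤ n ∧ n ≤ n₀ ∧ mhP f (n+1) ≤ mhP f n := by
    by_contra hcon
    push_neg at hcon
    have hgrow : ∀ k, k ≤ n₀ - 1 → mhP f 1 + k ≤ mhP f (1 + k) := by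
      intro k
      induction k with
      | zero => simp
      | succ k ih =>
        intro hk
        have h1 : mhP f 1 + k ≤ mhP f (1 + k) := ih (by omega)
        have h2 : mhP f (1 + k) < mhP f (1 + k + 1) := hcon (1+k) (by omega) (by omega)
        have e : 1 + (k+1) = 1 + k + 1 := by omega
        rw [e]
        omega
    have hg := hgrow (n₀ - 1) le_rfl
    rw [show 1 + (n₀ - 1) = n₀ from by omega] at hg
    -- so mhP f 1 = 1, f is constant
    have hP1eq : mhP f 1 = 1 := by omega
    have hconst : ∀ a b : ℕ, f a = f b := by
      intro a b
      obtain ⟨w, hw⟩ := Set.ncard_eq_one.mp hP1eq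
      have ha : mhW f 1 a ∈ ({w} : Set _) := hw ▸ Set.mem_range_self a
      have hb : mhW f 1 b ∈ ({w} : Set _) := hw ▸ Set.mem_range_self b
      have := congrFun ((Set.mem_singleton_iff.mp ha).trans
        (Set.mem_singleton_iff.mp hb).symm) 0
      simpa [mhW] using this
    have h2 : mhP f (1+1) ≤ 1 := by
      have hsub : Set.range (mhW f (1+1)) ⊆ {mhW f (1+1) 0} := by
        rintro w ⟨m, rfl⟩
        simp only [Set.mem_singleton_iff]
        funext i
        exact hconst _ _
      calc mhP f (1+1) ≤ ({mhW f (1+1) 0} : Set _).ncard :=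
            Set.ncard_le_ncard hsub (Set.toFinite _)
        _ = 1 := Set.ncard_singleton _
    have := hcon 1 le_rfl hn₀
    omega
  obtain ⟨n, hn1, hnn₀, hle⟩ := hex
  have hn1pos : 0 < n := hn1
  -- pigeonhole on windows of length n among positions 0..n₀
  haveI : Fintype (Set.range (mhW f n)) := (Set.toFinite _).fintype
  have hcard : Fintype.card (Set.range (mhW f n)) < Fintype.card (Fin (n₀ + 1)) := by
    rw [Fintype.card_fin, ← Nat.card_eq_fintype_card, Nat.card_coe_set_eq]
    have h1 : mhP f n ≤ n₀ := le_trans (mh_mono' f hnn₀) hPn₀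
    have h2 : mhP f n = (Set.range (mhW f n)).ncard := rfl
    omega
  obtain ⟨i, j, hij, heq⟩ := Fintype.exists_ne_map_eq_of_card_lt
    (fun i : Fin (n₀ + 1) => (⟨mhW f n i.1, Set.mem_range_self _⟩ : Set.range (mhW f n))) hcard
  have heq' : mhW f n i.1 = mhW f n j.1 := congrArg Subtype.val heq
  have main : ∀ a b : ℕ, a < b → b ≤ n₀ → mhW f n a = mhW f n b →
      ∀ x : ℕ, n₀ < x → f (x + (b - a)) = f x := by
    intro a b hab hbn hwab x hx
    have hk : mhW f n (a + (x - a)) = mhW f n (b + (x - a)) := mh_prop f n hle hwab _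
    have hv := congrFun hk ⟨0, hn1pos⟩
    simp only [mhW] at hv
    rw [show a + (x - a) + (0 : ℕ) = x from by omega,
        show b + (x - a) + (0 : ℕ) = x + (b - a) from by omega] at hv
    exact hv.symm
  rcases Nat.lt_or_ge i.1 j.1 with hlt | hge
  · exact ⟨j.1 - i.1, by omega, by have := j.2; omega,
      main i.1 j.1 hlt (by have := j.2; omega) heq'⟩
  · have hlt : j.1 < i.1 := by
      rcases Nat.lt_or_ge j.1 i.1 with h | h
      · exact h
      · exact absurd (Fin.ext (le_antisymm h hge)) hij
    exact ⟨i.1 - j.1, by omega, by have := i.2; omega,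
      main j.1 i.1 hlt (by have := i.2; omega) heq'.symm⟩
end

section
/- If f : {a, a+1, …, a+i-1} → A is a finite word, n₀ ≥ 1 satisfies P_f(n₀) ≤ n₀, and i > 3n₀, then the restriction of f to {a+n₀, a+n₀+1, …, a+i-n₀} is periodic with period at most n₀. -/
namespace MHaux

variable {A : Type*} [Finite A]

/-- The set of length-`n` windows of `f` at positions `m ∈ [a, a+i-n₀]`. -/
def D (f : ℤ → A) (a : ℤ) (i n₀ n : ℕ) : Set (Fin n → A) :=
  {w | ∃ m : ℤ, a ≤ m ∧ m + (n₀ : ℤ) ≤ a + (i : ℤ) ∧ ∀ j : Fin n, w j = f (m + (j : ℤ))}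

/-- The window of length `n` at position `m`. -/
def win (f : ℤ → A) (n : ℕ) (m : ℤ) : Fin n → A := fun j => f (m + (j : ℤ))

lemma win_mem {f : ℤ → A} {a : ℤ} {i n₀ : ℕ} (n : ℕ) {m : ℤ}
    (h1 : a ≤ m) (h2 : m + (n₀ : ℤ) ≤ a + (i : ℤ)) : win f n m ∈ D f a i n₀ n :=
  ⟨m, h1, h2, fun _ => rfl⟩

lemma D_eq_image (f : ℤ → A) (a : ℤ) (i n₀ n : ℕ) :
    D f a i n₀ n = (fun w : Fin (n + 1) → A => w ∘ Fin.castSucc) '' D f a i n₀ (n + 1) := by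
  ext w
  constructor
  · rintro ⟨m, h1, h2, h3⟩
    refine ⟨win f (n + 1) m, win_mem _ h1 h2, ?_⟩
    funext j
    simp only [Function.comp, win]
    rw [h3 j]
    norm_num
  · rintro ⟨w', ⟨m, h1, h2, h3⟩, rfl⟩
    refine ⟨m, h1, h2, fun j => ?_⟩
    simp only [Function.comp]
    rw [h3 (Fin.castSucc j)]
    norm_num

lemma card_mono (f : ℤ → A) (a : ℤ) (i n₀ n : ℕ) :
    (D f a i n₀ n).ncard ≤ (D f a i n₀ (n + 1)).ncard := by
  rw [D_eq_image f a i n₀ n]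
  exact Set.ncard_image_le (Set.toFinite _)

end MHaux

open MHaux in
/-- **Morse–Hedlund theorem for a finite word.** If `f` is a word on the
interval `{a, a+1, …, a+i-1}`, `n₀ ≥ 1` satisfies `P_f(n₀) ≤ n₀`, and
`i > 3n₀`, then the restriction of `f` to `{a+n₀, …, a+i-n₀}` is periodic of
period at most `n₀`. -/
theorem morse_hedlund_finite {A : Type*} [Finite A] (f : ℤ → A) (a : ℤ) (i n₀ : ℕ)
    (hn₀ : 1 ≤ n₀) (hi : 3 * n₀ < i)
    (hP : (Set.ncard {w : Fin n₀ → A | ∃ m : ℤ, a ≤ m ∧ m + (n₀ : ℤ) ≤ a + (i : ℤ) ∧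
        ∀ j : Fin n₀, w j = f (m + (j : ℤ))}) ≤ n₀) :
    ∃ p : ℤ, 1 ≤ p ∧ p ≤ (n₀ : ℤ) ∧
      ∀ x : ℤ, a + (n₀ : ℤ) ≤ x → x + p ≤ a + (i : ℤ) - (n₀ : ℤ) → f (x + p) = f x := by
  have hP' : (D f a i n₀ n₀).ncard ≤ n₀ := hP
  clear hP
  -- case on whether there are at most one letter in the middle
  by_cases h1 : (D f a i n₀ 1).ncard ≤ 1
  · -- the middle of the word is constant; period 1
    refine ⟨1, le_refl _, by exact_mod_cast hn₀, fun x hx hx' => ?_⟩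
    have hxa : a ≤ x := le_trans (by linarith [Int.ofNat_nonneg n₀]) hx
    have hm1 : win f 1 x ∈ D f a i n₀ 1 := win_mem 1 hxa (by push_cast at hx' ⊢; linarith)
    have hm2 : win f 1 (x + 1) ∈ D f a i n₀ 1 := win_mem 1 (by linarith) (by push_cast at hx' ⊢; linarith)
    have : win f 1 x = win f 1 (x + 1) := by
      rcases (Set.ncard_le_one_iff_eq (Set.toFinite _)).mp h1 with h | ⟨c, hc⟩
      · exact absurd hm1 (by simp [h])
      · rw [hc] at hm1 hm2; rw [hm1, hm2]
    have := congrFun this 0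
    simp only [win, Fin.val_zero, Int.ofNat_zero, add_zero] at this
    rw [← this]
  · -- there is a plateau: some n with 1 ≤ n < n₀ and equal cardinalities
    push_neg at h1
    have hmono : ∀ n k : ℕ, n ≤ k → (D f a i n₀ n).ncard ≤ (D f a i n₀ k).ncard := by
      intro n k hnk
      induction k with
      | zero => have : n = 0 := by omega
                subst this; exact le_refl _
      | succ k ih =>
        rcases Nat.lt_or_ge n (k + 1) with h | h
        · exact le_trans (ih (by omega)) (card_mono f a i n₀ k)
        · have : n = k + 1 := by omega
          subst this; exact le_refl _
    have hplateau : ∃ n : ℕ, 1 ≤ n ∧ n < n₀ ∧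
        (D f a i n₀ n).ncard = (D f a i n₀ (n + 1)).ncard := by
      by_contra hcon
      push_neg at hcon
      have hstrict : ∀ n : ℕ, 1 ≤ n → n < n₀ →
          (D f a i n₀ n).ncard < (D f a i n₀ (n + 1)).ncard := fun n h h' =>
        lt_of_le_of_ne (card_mono f a i n₀ n) (hcon n h h')
      have key : ∀ t : ℕ, t < n₀ → t + 2 ≤ (D f a i n₀ (t + 1)).ncard := by
        intro t
        induction t with
        | zero => intro _; simpa using Nat.succ_le_of_lt h1
        | succ t ih =>
          intro ht
          have h2 := hstrict (t + 1) (by omega) (by omega)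
          have := ih (by omega)
          omega
      have := key (n₀ - 1) (by omega)
      have hfin : (D f a i n₀ (n₀ - 1 + 1)).ncard ≤ (D f a i n₀ n₀).ncard :=
        hmono _ _ (by omega)
      omega
    obtain ⟨n, hn1, hnlt, hplat⟩ := hplateau
    -- injectivity of the prefix map on D (n+1)
    have hinj : Set.InjOn (fun w : Fin (n + 1) → A => w ∘ Fin.castSucc) (D f a i n₀ (n + 1)) := by
      apply Set.injOn_of_ncard_image_eq
      · rw [← D_eq_image]; exact hplat
      · exact Set.toFinite _
    -- unique extension property
    have Ext : ∀ m m' : ℤ, a ≤ m → m + (n₀ : ℤ) ≤ a + (i : ℤ) → a ≤ m' →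
        m' + (n₀ : ℤ) ≤ a + (i : ℤ) →
        (∀ j : ℕ, j < n → f (m + (j : ℤ)) = f (m' + (j : ℤ))) →
        f (m + (n : ℤ)) = f (m' + (n : ℤ)) := by
      intro m m' hm1 hm2 hm1' hm2' hj
      have hpre : win f (n + 1) m ∘ Fin.castSucc = win f (n + 1) m' ∘ Fin.castSucc := by
        funext j
        simp only [Function.comp, win, Fin.coe_castSucc]
        exact hj j j.isLt
      have := hinj (win_mem (n + 1) hm1 hm2) (win_mem (n + 1) hm1' hm2') hpre
      have := congrFun this (Fin.last n)
      simpa [win] using this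
    -- pigeonhole: two equal windows among positions a, ..., a + n₀
    obtain ⟨m₁, m₂, hm₁, hm₂, hlt, heq⟩ :
        ∃ m₁ m₂ : ℤ, a ≤ m₁ ∧ m₂ ≤ a + (n₀ : ℤ) ∧ m₁ < m₂ ∧ win f n₀ m₁ = win f n₀ m₂ := by
      have hfin : (D f a i n₀ n₀).Finite := Set.toFinite _
      have hmaps : ∀ m ∈ Finset.Icc a (a + (n₀ : ℤ)), win f n₀ m ∈ hfin.toFinset := by
        intro m hm
        rw [Finset.mem_Icc] at hm
        rw [Set.Finite.mem_toFinset]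
        refine win_mem n₀ hm.1 ?_
        have : (3 * n₀ : ℤ) < i := by exact_mod_cast hi
        push_cast
        linarith [hm.2]
      have hcard : hfin.toFinset.card < (Finset.Icc a (a + (n₀ : ℤ))).card := by
        have h1 : hfin.toFinset.card = (D f a i n₀ n₀).ncard :=
          (Set.ncard_eq_toFinset_card _ hfin).symm
        rw [Int.card_Icc]
        omega
      obtain ⟨x, hx, y, hy, hxy, hwin⟩ :=
        Finset.exists_ne_map_eq_of_card_lt_of_maps_to hcard hmaps
      rw [Finset.mem_Icc] at hx hy
      rcases lt_or_gt_of_ne hxy with h | h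
      · exact ⟨x, y, hx.1, hy.2, h, hwin⟩
      · exact ⟨y, x, hy.1, hx.2, h, hwin.symm⟩
    set p : ℤ := m₂ - m₁ with hp
    have hp1 : 1 ≤ p := by omega
    have hpn : p ≤ (n₀ : ℤ) := by omega
    refine ⟨p, hp1, hpn, ?_⟩
    -- propagation
    have hi' : (3 * n₀ : ℤ) < i := by exact_mod_cast hi
    have key : ∀ k : ℕ, m₂ + (k : ℤ) + (n₀ : ℤ) ≤ a + (i : ℤ) →
        ∀ j : ℕ, j < n → f (m₁ + (k : ℤ) + (j : ℤ)) = f (m₂ + (k : ℤ) + (j : ℤ)) := by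
      intro k
      induction k with
      | zero =>
        intro _ j hj
        have := congrFun heq ⟨j, by omega⟩
        simpa [win] using this
      | succ k ih =>
        intro hk j hj
        have hk' : m₂ + (k : ℤ) + (n₀ : ℤ) ≤ a + (i : ℤ) := by push_cast at hk ⊢; linarith
        have ihk := ih hk'
        have hext : f (m₁ + (k : ℤ) + (n : ℤ)) = f (m₂ + (k : ℤ) + (n : ℤ)) := by
          refine Ext (m₁ + (k : ℤ)) (m₂ + (k : ℤ)) (by omega) ?_ (by omega) hk' ihk
          have : m₁ + (k : ℤ) ≤ m₂ + (k : ℤ) := by omega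
          linarith
        rcases Nat.lt_or_ge (j + 1) n with h | h
        · have := ihk (j + 1) h
          push_cast at this ⊢
          convert this using 2 <;> ring
        · have hjn : j + 1 = n := by omega
          have := hext
          push_cast at this ⊢
          rw [show (m₁ : ℤ) + (k + 1) + j = m₁ + k + n by rw [← hjn]; push_cast; ring,
            show (m₂ : ℤ) + (k + 1) + j = m₂ + k + n by rw [← hjn]; push_cast; ring]
          exact this
    intro x hx hx'
    have hxm : m₁ ≤ x := by
      have : m₂ ≤ a + (n₀ : ℤ) := hm₂
      omega
    set k : ℕ := (x - m₁).toNat with hkdef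
    have hkx : (k : ℤ) = x - m₁ := Int.toNat_of_nonneg (by omega)
    have h2 : m₂ + (k : ℤ) + (n₀ : ℤ) ≤ a + (i : ℤ) := by
      have : m₂ + (k : ℤ) = x + p := by omega
      omega
    have := key k h2 0 (by omega)
    have hres : f x = f (x + p) := by
      rw [show m₁ + (k : ℤ) + ((0 : ℕ) : ℤ) = x by push_cast; omega,
        show m₂ + (k : ℤ) + ((0 : ℕ) : ℤ) = x + p by push_cast; omega] at this
      exact this
    exact hres.symm
end

section
/- Suppose S ⊂ ℤ² is finite and convex with D_η(S) ≤ 0, and let T be minimal (for inclusion) among nonempty convex subsets of S with discrepancy at most D_η(S). Then every extreme point of T is η-generated by T, and for every extreme point y of T, D_η(T \ {y}) = D_η(T) + 1. -/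
open Classical

namespace Nivat

noncomputable section

/-- Embedding of `ℤ × ℤ` into `ℝ × ℝ`. -/
def e (p : ℤ × ℤ) : ℝ × ℝ := ((p.1 : ℝ), (p.2 : ℝ))

/-- A finite set `S ⊆ ℤ²` is convex if `S = conv(S) ∩ ℤ²`. -/
def IsConvexSet (S : Finset (ℤ × ℤ)) : Prop :=
  ∀ p : ℤ × ℤ, e p ∈ convexHull ℝ (e '' (S : Set (ℤ × ℤ))) → p ∈ S

variable {A : Type*}

/-- The `η`-coloring of `S` induced by the translate by `u`. -/
def pat (η : ℤ × ℤ → A) (S : Finset (ℤ × ℤ)) (u : ℤ × ℤ) : S → A :=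
  fun x => η ((x : ℤ × ℤ) + u)

/-- `P_η(S)`: number of distinct `η`-colorings of `S`. -/
def Pc (η : ℤ × ℤ → A) (S : Finset (ℤ × ℤ)) : ℕ :=
  (Set.range (pat η S)).ncard

/-- Discrepancy `D_η(S) = P_η(S) - |S|`. -/
def Dc (η : ℤ × ℤ → A) (S : Finset (ℤ × ℤ)) : ℤ :=
  (Pc η S : ℤ) - (S.card : ℤ)

/-- Restriction of a coloring of `S` to a subset `T`. -/
def res {S T : Finset (ℤ × ℤ)} (h : T ⊆ S) (f : S → A) : T → A :=
  fun x => f ⟨(x : ℤ × ℤ), h x.2⟩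

/-- A coloring `α` of `T` extends uniquely to an `η`-coloring of `S`. -/
def ExtendsUniquely (η : ℤ × ℤ → A) {T S : Finset (ℤ × ℤ)} (h : T ⊆ S) (α : T → A) : Prop :=
  ∃! β : S → A, β ∈ Set.range (pat η S) ∧ res h β = α

/-- A coloring `α` of `T` has at least two extensions to `η`-colorings of `S`. -/
def ExtendsNonUniquely (η : ℤ × ℤ → A) {T S : Finset (ℤ × ℤ)} (h : T ⊆ S) (α : T → A) : Prop :=
  ∃ β₁ β₂ : S → A, β₁ ∈ Set.range (pat η S) ∧ β₂ ∈ Set.range (pat η S) ∧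
    β₁ ≠ β₂ ∧ res h β₁ = α ∧ res h β₂ = α

theorem eraseSub (S : Finset (ℤ × ℤ)) (x : ℤ × ℤ) : S.erase x ⊆ S :=
  fun _ hy => Finset.mem_of_mem_erase hy

theorem sdiffSub (S T : Finset (ℤ × ℤ)) : S \ T ⊆ S :=
  fun _ hy => (Finset.mem_sdiff.mp hy).1

/-- `x ∈ S` is `η`-generated by `S`: every `η`-coloring of `S \ {x}`
extends uniquely to an `η`-coloring of `S`. -/
def Generated (η : ℤ × ℤ → A) (S : Finset (ℤ × ℤ)) (x : ℤ × ℤ) : Prop :=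
  ∀ α ∈ Set.range (pat η (S.erase x)), ExtendsUniquely η (eraseSub S x) α

/-- `x` is an extreme point of the convex polygon `conv(S)`. -/
def IsExtremePt (S : Finset (ℤ × ℤ)) (x : ℤ × ℤ) : Prop :=
  e x ∈ Set.extremePoints ℝ (convexHull ℝ (e '' (S : Set (ℤ × ℤ))))

/-- A weak `η`-generating set: finite, nonempty, convex, and every extreme
point is `η`-generated. -/
def WeakGenerating (η : ℤ × ℤ → A) (S : Finset (ℤ × ℤ)) : Prop :=
  S.Nonempty ∧ IsConvexSet S ∧ ∀ x ∈ S, IsExtremePt S x → Generated η S x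

/-- An `η`-generating set: weak generating and every nonempty proper convex
subset has strictly larger discrepancy. -/
def Generating (η : ℤ × ℤ → A) (S : Finset (ℤ × ℤ)) : Prop :=
  WeakGenerating η S ∧
    ∀ T ⊆ S, T ≠ S → T.Nonempty → IsConvexSet T → Dc η S < Dc η T

/-- The segment from `e p` to `e q` is a (1-dimensional exposed) boundary edge
of the convex polygon `conv(S)`. -/
def IsEdge (S : Finset (ℤ × ℤ)) (p q : ℤ × ℤ) : Prop :=
  p ≠ q ∧ p ∈ S ∧ q ∈ S ∧ ∃ ℓ : (ℝ × ℝ) →ₗ[ℝ] ℝ, ∃ c : ℝ,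
    (∀ x ∈ convexHull ℝ (e '' (S : Set (ℤ × ℤ))), ℓ x ≤ c) ∧
    {x ∈ convexHull ℝ (e '' (S : Set (ℤ × ℤ))) | ℓ x = c} = segment ℝ (e p) (e q)

/-- An edge of `S`, oriented positively (the set lies to the left of `p → q`). -/
def IsOrientedEdge (S : Finset (ℤ × ℤ)) (p q : ℤ × ℤ) : Prop :=
  IsEdge S p q ∧ ∀ x ∈ S, 0 ≤ (q.1 - p.1) * (x.2 - p.2) - (q.2 - p.2) * (x.1 - p.1)

/-- The lattice points of `S` lying on the edge from `p` to `q`. -/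
def edgePts (S : Finset (ℤ × ℤ)) (p q : ℤ × ℤ) : Finset (ℤ × ℤ) :=
  S.filter (fun x => e x ∈ segment ℝ (e p) (e q))

/-- The rectangle `R_{n,k} = [0,n) × [0,k) ∩ ℤ²`. -/
def Rect (n k : ℕ) : Finset (ℤ × ℤ) :=
  Finset.Ico (0 : ℤ) (n : ℤ) ×ˢ Finset.Ico (0 : ℤ) (k : ℤ)

/-- `η` is aperiodic: no nonzero period vector. -/
def Aperiodic (η : ℤ × ℤ → A) : Prop :=
  ∀ v : ℤ × ℤ, v ≠ 0 → ∃ x : ℤ × ℤ, η (x + v) ≠ η x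

/-- Action of a `2 × 2` integer matrix on `ℤ²`. -/
def Mv (M : Matrix (Fin 2) (Fin 2) ℤ) (p : ℤ × ℤ) : ℤ × ℤ :=
  (M 0 0 * p.1 + M 0 1 * p.2, M 1 0 * p.1 + M 1 1 * p.2)

/-- `u` and `v` are positively parallel (same direction). -/
def PosParallel (u v : ℤ × ℤ) : Prop :=
  ∃ t₁ t₂ : ℤ, 0 < t₁ ∧ 0 < t₂ ∧ t₁ • u = t₂ • v

/-- The directed rational line through the origin with direction `d` is
one-sided `η`-expansive: for some `a, b ∈ ℕ` and `A ∈ SL₂(ℤ)` taking the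
downward `y`-axis to the direction `d`, every `(η ∘ A)`-coloring of
`[0,a] × [-b,b]` extends uniquely to `[0,a] × [-b,b] ∪ {(-1,0)}`. -/
def OneSidedExpansive (η : ℤ × ℤ → A) (d : ℤ × ℤ) : Prop :=
  ∃ a b : ℕ, ∃ M : Matrix (Fin 2) (Fin 2) ℤ, M.det = 1 ∧
    PosParallel (Mv M (0, -1)) d ∧
    ∀ u v : ℤ × ℤ,
      (∀ x : ℤ × ℤ, 0 ≤ x.1 → x.1 ≤ (a : ℤ) → -(b : ℤ) ≤ x.2 → x.2 ≤ (b : ℤ) →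
        η (Mv M (x + u)) = η (Mv M (x + v))) →
      η (Mv M ((-1, 0) + u)) = η (Mv M ((-1, 0) + v))

end

end Nivat

namespace Nivat

lemma e_injective : Function.Injective e := by
  intro p q h
  have h1 : (p.1 : ℝ) = q.1 := congrArg Prod.fst h
  have h2 : (p.2 : ℝ) = q.2 := congrArg Prod.snd h
  exact Prod.ext (by exact_mod_cast h1) (by exact_mod_cast h2)

lemma range_res_eq {A : Type*} (η : ℤ × ℤ → A) {T' T : Finset (ℤ × ℤ)} (h : T' ⊆ T) :
    res (A := A) h '' Set.range (pat η T) = Set.range (pat η T') := by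
  rw [← Set.range_comp]
  rfl

lemma Pc_mono {A : Type*} [Finite A] (η : ℤ × ℤ → A) {T' T : Finset (ℤ × ℤ)} (h : T' ⊆ T) :
    Pc η T' ≤ Pc η T := by
  rw [Pc, ← range_res_eq η h]
  exact Set.ncard_image_le (Set.toFinite _)

lemma Pc_pos {A : Type*} [Finite A] (η : ℤ × ℤ → A) (T : Finset (ℤ × ℤ)) :
    1 ≤ Pc η T :=
  (Set.ncard_pos (Set.toFinite _)).mpr ⟨pat η T 0, ⟨0, rfl⟩⟩

lemma erase_convex {T : Finset (ℤ × ℤ)} {y : ℤ × ℤ} (hTconv : IsConvexSet T)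
    (hext : IsExtremePt T y) : IsConvexSet (T.erase y) := by
  intro p hp
  have hsub : e '' ((T.erase y : Finset (ℤ × ℤ)) : Set (ℤ × ℤ)) ⊆ e '' (T : Set (ℤ × ℤ)) :=
    Set.image_mono (by
      intro x hx
      exact Finset.mem_coe.mpr (Finset.mem_of_mem_erase (Finset.mem_coe.mp hx)))
  have hpT : p ∈ T := hTconv p ((convexHull_mono hsub) hp)
  rw [Finset.mem_erase]
  refine ⟨?_, hpT⟩
  rintro rfl
  have h1 : e p ∉ convexHull ℝ (convexHull ℝ (e '' (T : Set (ℤ × ℤ))) \ {e p}) :=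
    (((convex_convexHull ℝ _).mem_extremePoints_iff_mem_diff_convexHull_diff).mp hext).2
  apply h1
  refine convexHull_mono ?_ hp
  rintro z ⟨q, hq, rfl⟩
  have hqT : q ∈ T := Finset.mem_of_mem_erase (Finset.mem_coe.mp hq)
  have hqp : q ≠ p := Finset.ne_of_mem_erase (Finset.mem_coe.mp hq)
  exact ⟨subset_convexHull ℝ _ ⟨q, Finset.mem_coe.mpr hqT, rfl⟩,
    fun hz => hqp (e_injective hz)⟩

/-- If `S` is finite convex with `D_η(S) ≤ 0` and `T` is minimal (for
inclusion) among nonempty convex subsets of `S` with discrepancy at most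
`D_η(S)`, then every extreme point of `T` is `η`-generated by `T`, and
removing any extreme point raises the discrepancy by exactly `1`. -/
theorem statement4 {A : Type*} [Finite A] (η : ℤ × ℤ → A) (S T : Finset (ℤ × ℤ))
    (hSconv : IsConvexSet S) (hD : Dc η S ≤ 0)
    (hTS : T ⊆ S) (hTne : T.Nonempty) (hTconv : IsConvexSet T)
    (hTD : Dc η T ≤ Dc η S)
    (hmin : ∀ T' ⊆ T, T'.Nonempty → IsConvexSet T' → Dc η T' ≤ Dc η S → T' = T) :
    (∀ y ∈ T, IsExtremePt T y → Generated η T y) ∧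
      (∀ y ∈ T, IsExtremePt T y → Dc η (T.erase y) = Dc η T + 1) := by
  have key : ∀ y ∈ T, IsExtremePt T y → Pc η (T.erase y) = Pc η T := by
    intro y hy hext
    have hle : Pc η (T.erase y) ≤ Pc η T := Pc_mono η (eraseSub T y)
    have hcard : (T.erase y).card = T.card - 1 := Finset.card_erase_of_mem hy
    have hc1 : 1 ≤ T.card := Finset.card_pos.mpr ⟨y, hy⟩
    rcases (T.erase y).eq_empty_or_nonempty with hemp | hne
    · have hc : T.card = 1 := by
        have := Finset.card_eq_zero.mpr hemp
        omega
      have hPT : (Pc η T : ℤ) ≤ 1 := by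
        have := hTD.trans hD
        rw [Dc, hc] at this
        omega
      have hPE : 1 ≤ Pc η (T.erase y) := Pc_pos η _
      omega
    · have hneq : T.erase y ≠ T := fun h => (Finset.notMem_erase y T) (by rw [h]; exact hy)
      have hgt : ¬ Dc η (T.erase y) ≤ Dc η S := fun h =>
        hneq (hmin _ (eraseSub T y) hne (erase_convex hTconv hext) h)
      have h1 : Dc η T < Dc η (T.erase y) := lt_of_le_of_lt hTD (not_le.mp hgt)
      rw [Dc, Dc, hcard] at h1
      have : ((T.card - 1 : ℕ) : ℤ) = (T.card : ℤ) - 1 := by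
        push_cast [Nat.cast_sub hc1]; ring
      omega
  refine ⟨?_, ?_⟩
  · intro y hy hext
    rintro α ⟨u, rfl⟩
    have hinj : Set.InjOn (res (A := A) (eraseSub T y)) (Set.range (pat η T)) := by
      apply Set.injOn_of_ncard_image_eq
      · rw [range_res_eq]
        exact key y hy hext
      · exact Set.toFinite _
    refine ⟨pat η T u, ⟨⟨u, rfl⟩, rfl⟩, ?_⟩
    rintro β ⟨hβ, hres⟩
    exact hinj hβ ⟨u, rfl⟩ hres
  · intro y hy hext
    have hcard : (T.erase y).card = T.card - 1 := Finset.card_erase_of_mem hy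
    have hc1 : 1 ≤ T.card := Finset.card_pos.mpr ⟨y, hy⟩
    have hP := key y hy hext
    rw [Dc, Dc, hcard, hP]
    have : ((T.card - 1 : ℕ) : ℤ) = (T.card : ℤ) - 1 := by
      push_cast [Nat.cast_sub hc1]; ring
    omega

end Nivat
end

section
/- Suppose S ⊂ ℤ² is a convex weak η-generating set such that every nonempty proper convex subset of S has strictly larger η-discrepancy, and let w be a boundary edge of S with S \ w nonempty. Then the number of η-colorings of S \ w that extend non-uniquely to η-colorings of S is at most |w ∩ S| − 1. -/
open Classical

namespace Nivat

theorem sdiff_edge_convex {S : Finset (ℤ × ℤ)} (hS : IsConvexSet S) {p q : ℤ × ℤ}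
    (hedge : IsEdge S p q) : IsConvexSet (S \ edgePts S p q) := by
  obtain ⟨hpq, hp, hq, ℓ, c, hle, hface⟩ := hedge
  intro x hx
  have hsub : (e '' ((S \ edgePts S p q : Finset (ℤ × ℤ)) : Set (ℤ × ℤ)))
      ⊆ e '' (S : Set (ℤ × ℤ)) := by
    apply Set.image_mono
    intro y hy
    exact (Finset.mem_sdiff.mp hy).1
  have hxS : x ∈ S := hS x (convexHull_mono hsub hx)
  have hlt : ∀ y ∈ e '' ((S \ edgePts S p q : Finset (ℤ × ℤ)) : Set (ℤ × ℤ)), ℓ y < c := by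
    rintro _ ⟨y, hy, rfl⟩
    have hyS : y ∈ S := (Finset.mem_sdiff.mp hy).1
    have hyw : y ∉ edgePts S p q := (Finset.mem_sdiff.mp hy).2
    have h1 : e y ∈ convexHull ℝ (e '' (S : Set (ℤ × ℤ))) :=
      subset_convexHull ℝ _ ⟨y, hyS, rfl⟩
    rcases lt_or_eq_of_le (hle _ h1) with h | h
    · exact h
    · exact absurd (Finset.mem_filter.mpr ⟨hyS, by rw [← hface]; exact ⟨h1, h⟩⟩) hyw
  have hhull : convexHull ℝ (e '' ((S \ edgePts S p q : Finset (ℤ × ℤ)) : Set (ℤ × ℤ)))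
      ⊆ {y | ℓ y < c} :=
    convexHull_min hlt (convex_halfSpace_lt ℓ.isLinear c)
  have hxlt : ℓ (e x) < c := hhull hx
  have hxnotw : x ∉ edgePts S p q := by
    intro hxw
    have hseg : e x ∈ segment ℝ (e p) (e q) := (Finset.mem_filter.mp hxw).2
    rw [← hface] at hseg
    exact absurd hseg.2 (by linarith)
  exact Finset.mem_sdiff.mpr ⟨hxS, hxnotw⟩

/-- If `S` is a convex weak `η`-generating set whose nonempty proper convex
subsets all have strictly larger `η`-discrepancy, and `w` is a boundary edge
of `S` with `S \ w` nonempty, then at most `|w ∩ S| - 1` `η`-colorings of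
`S \ w` extend non-uniquely to `η`-colorings of `S`. -/
theorem statement7 {A : Type*} [Finite A] (η : ℤ × ℤ → A) (S : Finset (ℤ × ℤ))
    (hweak : WeakGenerating η S)
    (hmin : ∀ T ⊆ S, T ≠ S → T.Nonempty → IsConvexSet T → Dc η S < Dc η T)
    (p q : ℤ × ℤ) (hedge : IsEdge S p q)
    (hne : (S \ edgePts S p q).Nonempty) :
    (Set.ncard {α : (S \ edgePts S p q : Finset (ℤ × ℤ)) → A |
        ExtendsNonUniquely η (sdiffSub S (edgePts S p q)) α} : ℤ)
      ≤ ((edgePts S p q).card : ℤ) - 1 := by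
  classical
  haveI : Fintype A := Fintype.ofFinite A
  set w := edgePts S p q with hwdef
  have hsub : S \ w ⊆ S := sdiffSub S w
  have hwS : w ⊆ S := Finset.filter_subset _ _
  have hpw : p ∈ w := Finset.mem_filter.mpr ⟨hedge.2.1, left_mem_segment ℝ _ _⟩
  have hTneS : S \ w ≠ S := by
    intro h
    have hp : p ∈ S \ w := h.symm ▸ hedge.2.1
    exact (Finset.mem_sdiff.mp hp).2 hpw
  have hconv : IsConvexSet (S \ w) := sdiff_edge_convex hweak.2.1 hedge
  have hD := hmin (S \ w) hsub hTneS hne hconv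
  have hcard : (S \ w).card = S.card - w.card := Finset.card_sdiff_of_subset hwS
  have hwle : w.card ≤ S.card := Finset.card_le_card hwS
  -- counting
  let φ : ({x // x ∈ S} → A) → ({x // x ∈ S \ w} → A) := res hsub
  have hφpat : ∀ u, φ (pat η S u) = pat η (S \ w) u := fun u => rfl
  let Fs : Finset ({x // x ∈ S} → A) := (Set.range (pat η S)).toFinset
  let img : Finset ({x // x ∈ S \ w} → A) := Fs.image φ
  have hFsmem : ∀ β, β ∈ Fs ↔ β ∈ Set.range (pat η S) := by
    intro β; simp [Fs]
  have himg : (img : Set _) = Set.range (pat η (S \ w)) := by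
    ext α
    simp only [img, Finset.coe_image, Set.mem_image, Finset.mem_coe, Set.mem_range]
    constructor
    · rintro ⟨β, hβ, rfl⟩
      obtain ⟨u, rfl⟩ := (hFsmem β).mp hβ
      exact ⟨u, (hφpat u).symm⟩
    · rintro ⟨u, rfl⟩
      exact ⟨pat η S u, (hFsmem _).mpr ⟨u, rfl⟩, hφpat u⟩
  have hPcS : Pc η S = Fs.card := Set.ncard_eq_toFinset_card' _
  have hPcT : Pc η (S \ w) = img.card := by
    rw [Pc, ← himg, Set.ncard_coe_finset]
  let Nf : Finset ({x // x ∈ S \ w} → A) :=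
    Finset.univ.filter (fun α => ExtendsNonUniquely η hsub α)
  have hNcard : ({α : (S \ w : Finset (ℤ × ℤ)) → A |
      ExtendsNonUniquely η (sdiffSub S w) α}).ncard = Nf.card := by
    rw [← Set.ncard_coe_finset]
    congr 1
    ext α
    simp [Nf]
  have hNfimg : Nf ⊆ img := by
    intro α hα
    obtain ⟨β₁, β₂, hβ₁, hβ₂, hne12, hr1, hr2⟩ := (Finset.mem_filter.mp hα).2
    exact Finset.mem_image.mpr ⟨β₁, (hFsmem β₁).mpr hβ₁, hr1⟩
  have hfiber : Fs.card = ∑ α ∈ img, (Fs.filter (fun β => φ β = α)).card :=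
    Finset.card_eq_sum_card_fiberwise (fun β hβ => Finset.mem_image_of_mem φ hβ)
  have hfib1 : ∀ α ∈ img \ Nf, 1 ≤ (Fs.filter (fun β => φ β = α)).card := by
    intro α hα
    obtain ⟨β, hβ, rfl⟩ := Finset.mem_image.mp (Finset.mem_sdiff.mp hα).1
    exact Finset.card_pos.mpr ⟨β, Finset.mem_filter.mpr ⟨hβ, rfl⟩⟩
  have hfib2 : ∀ α ∈ Nf, 2 ≤ (Fs.filter (fun β => φ β = α)).card := by
    intro α hα
    obtain ⟨β₁, β₂, hβ₁, hβ₂, hne12, hr1, hr2⟩ := (Finset.mem_filter.mp hα).2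
    refine Finset.one_lt_card.mpr ⟨β₁, ?_, β₂, ?_, hne12⟩
    · exact Finset.mem_filter.mpr ⟨(hFsmem β₁).mpr hβ₁, hr1⟩
    · exact Finset.mem_filter.mpr ⟨(hFsmem β₂).mpr hβ₂, hr2⟩
  have hsplit : ∑ α ∈ img \ Nf, (Fs.filter (fun β => φ β = α)).card
      + ∑ α ∈ Nf, (Fs.filter (fun β => φ β = α)).card
      = ∑ α ∈ img, (Fs.filter (fun β => φ β = α)).card :=
    Finset.sum_sdiff hNfimg
  have hs1 : (img \ Nf).card ≤ ∑ α ∈ img \ Nf, (Fs.filter (fun β => φ β = α)).card := by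
    calc (img \ Nf).card = ∑ _α ∈ img \ Nf, 1 := by simp
    _ ≤ _ := Finset.sum_le_sum hfib1
  have hs2 : 2 * Nf.card ≤ ∑ α ∈ Nf, (Fs.filter (fun β => φ β = α)).card := by
    calc 2 * Nf.card = ∑ _α ∈ Nf, 2 := by rw [Finset.sum_const, smul_eq_mul, mul_comm]
    _ ≤ _ := Finset.sum_le_sum hfib2
  have hsd : (img \ Nf).card = img.card - Nf.card := Finset.card_sdiff_of_subset hNfimg
  have hNfle : Nf.card ≤ img.card := Finset.card_le_card hNfimg
  have hmain : img.card + Nf.card ≤ Fs.card := by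
    rw [hfiber, ← hsplit]
    omega
  rw [Dc, Dc, hPcS, hPcT, hcard] at hD
  rw [hNcard]
  omega

end Nivat
end

section
/- Let S ⊂ ℤ² be a finite convex set having two antiparallel boundary edges w₁ and w₂. Then every line parallel to w₁ that intersects S contains at least min(|w₁ ∩ S|, |w₂ ∩ S|) − 1 integer points of S. -/
open Classical

namespace Nivat


noncomputable section

lemma prim_int_pair (g : ℤ × ℤ) (hg : Int.gcd g.1 g.2 = 1) (w : ℤ × ℤ)
    (h : g.2 * w.1 = g.1 * w.2) : ∃ k : ℤ, w.1 = k * g.1 ∧ w.2 = k * g.2 := by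
  by_cases h1 : g.1 = 0
  · have h2 : g.2 = 1 ∨ g.2 = -1 := by
      have h3 : g.2.natAbs = 1 := by
        have := hg; rw [h1] at this; simpa [Int.gcd] using this
      rcases Int.natAbs_eq g.2 with h' | h' <;> omega
    have hw1 : w.1 = 0 := by rw [h1] at h; rcases h2 with h2|h2 <;> rw [h2] at h <;> omega
    exact ⟨g.2 * w.2, by rw [h1, hw1]; ring, by rcases h2 with h2|h2 <;> rw [h2] <;> ring⟩
  · have hco : IsCoprime g.1 g.2 := Int.isCoprime_iff_gcd_eq_one.mpr hg
    have hdvd : g.1 ∣ w.1 := by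
      have : g.1 ∣ w.1 * g.2 := ⟨w.2, by linarith [h]⟩
      exact hco.dvd_of_dvd_mul_right this
    obtain ⟨k, hk⟩ := hdvd
    refine ⟨k, by rw [hk]; ring, ?_⟩
    have : g.1 * w.2 = g.1 * (k * g.2) := by rw [← h, hk]; ring
    exact mul_left_cancel₀ h1 this

lemma prim_int' (g : ℤ × ℤ) (hg : Int.gcd g.1 g.2 = 1) (w1 w2 : ℤ)
    (h : g.2 * w1 = g.1 * w2) : ∃ k : ℤ, w1 = k * g.1 ∧ w2 = k * g.2 := by
  obtain ⟨k, h1, h2⟩ := prim_int_pair g hg (w1, w2) h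
  exact ⟨k, h1, h2⟩

lemma prim_real_pair (g : ℤ × ℤ) (hg : g ≠ 0) (X : ℝ × ℝ)
    (h : (g.2 : ℝ) * X.1 = (g.1 : ℝ) * X.2) : ∃ s : ℝ, X.1 = s * g.1 ∧ X.2 = s * g.2 := by
  by_cases h1 : g.1 = 0
  · have h2 : g.2 ≠ 0 := by
      intro h2; exact hg (Prod.ext h1 h2)
    have h2' : (g.2:ℝ) ≠ 0 := Int.cast_ne_zero.mpr h2
    refine ⟨X.2 / g.2, ?_, by field_simp⟩
    have hx1 : X.1 = 0 := by
      rw [h1] at h; simp at h; rcases h with h | h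
      · exact absurd h h2
      · exact h
    rw [hx1, h1]; simp
  · have h1' : (g.1:ℝ) ≠ 0 := Int.cast_ne_zero.mpr h1
    refine ⟨X.1 / g.1, by field_simp, ?_⟩
    field_simp
    linarith [h]

lemma prim_real' (g : ℤ × ℤ) (hg : g ≠ 0) (X1 X2 : ℝ)
    (h : (g.2 : ℝ) * X1 = (g.1 : ℝ) * X2) : ∃ s : ℝ, X1 = s * g.1 ∧ X2 = s * g.2 := by
  obtain ⟨s, h1, h2⟩ := prim_real_pair g hg (X1, X2) h
  exact ⟨s, h1, h2⟩

lemma edge_card_le (S : Finset (ℤ × ℤ)) (p q : ℤ × ℤ) (g : ℤ × ℤ)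
    (hgcd : Int.gcd g.1 g.2 = 1) (d : ℤ) (hd : 0 < d)
    (h1 : q.1 - p.1 = d * g.1) (h2 : q.2 - p.2 = d * g.2) :
    (edgePts S p q).card ≤ d.toNat + 1 := by
  have hg0 : g ≠ 0 := by
    intro h; rw [h] at hgcd; simp at hgcd
  have hgor : (g.1 : ℝ) ≠ 0 ∨ (g.2 : ℝ) ≠ 0 := by
    by_contra hc; push_neg at hc
    exact hg0 (Prod.ext (by exact_mod_cast hc.1) (by exact_mod_cast hc.2))
  have hsub : edgePts S p q ⊆ (Finset.Icc (0:ℤ) d).image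
      (fun j : ℤ => ((p.1 + j * g.1, p.2 + j * g.2) : ℤ × ℤ)) := by
    intro x hx
    rw [edgePts, Finset.mem_filter] at hx
    obtain ⟨hxS, hxseg⟩ := hx
    obtain ⟨u, w, hu, hw, huw, hxc⟩ := hxseg
    have hx1 : u * p.1 + w * q.1 = (x.1 : ℝ) := by
      have := congrArg Prod.fst hxc; simpa [e] using this
    have hx2 : u * p.2 + w * q.2 = (x.2 : ℝ) := by
      have := congrArg Prod.snd hxc; simpa [e] using this
    have hq1 : (q.1 : ℝ) - p.1 = (d : ℝ) * g.1 := by exact_mod_cast h1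
    have hq2 : (q.2 : ℝ) - p.2 = (d : ℝ) * g.2 := by exact_mod_cast h2
    have hd1 : (x.1 : ℝ) - p.1 = w * d * g.1 := by
      have hu' : u = 1 - w := by linarith
      rw [hu'] at hx1; linear_combination -hx1 + w * hq1
    have hd2 : (x.2 : ℝ) - p.2 = w * d * g.2 := by
      have hu' : u = 1 - w := by linarith
      rw [hu'] at hx2; linear_combination -hx2 + w * hq2
    have hlam : g.2 * (x.1 - p.1) = g.1 * (x.2 - p.2) := by
      have : (g.2 : ℝ) * ((x.1:ℝ) - p.1) = (g.1:ℝ) * ((x.2:ℝ) - p.2) := by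
        rw [hd1, hd2]; ring
      exact_mod_cast this
    obtain ⟨k, hk1, hk2⟩ := prim_int' g hgcd (x.1 - p.1) (x.2 - p.2) hlam
    have hkwd : (k : ℝ) = w * d := by
      rcases hgor with hgc | hgc
      · have : (k:ℝ) * g.1 = w * d * g.1 := by rw [← hd1]; exact_mod_cast hk1.symm
        exact mul_right_cancel₀ hgc this
      · have : (k:ℝ) * g.2 = w * d * g.2 := by rw [← hd2]; exact_mod_cast hk2.symm
        exact mul_right_cancel₀ hgc this
    have hw1' : w ≤ 1 := by linarith
    have hk0 : 0 ≤ k := by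
      have : (0:ℝ) ≤ (k:ℝ) := by rw [hkwd]; positivity
      exact_mod_cast this
    have hkd : k ≤ d := by
      have : (k:ℝ) ≤ (d:ℝ) := by
        rw [hkwd]; nlinarith [hd.le, (by exact_mod_cast hd : (0:ℝ) < (d:ℝ))]
      exact_mod_cast this
    rw [Finset.mem_image]
    exact ⟨k, Finset.mem_Icc.mpr ⟨hk0, hkd⟩, by
      apply Prod.ext <;> simp <;> omega⟩
  calc (edgePts S p q).card ≤ _ := Finset.card_le_card hsub
    _ ≤ (Finset.Icc (0:ℤ) d).card := Finset.card_image_le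
    _ = d.toNat + 1 := by rw [Int.card_Icc]; omega

lemma e_comb (s : ℝ) (g z : ℤ × ℤ) :
    s • e g + e z = ((s * g.1 + z.1 : ℝ), (s * g.2 + z.2 : ℝ)) := by
  apply Prod.ext <;> simp [e]

lemma comb2 (s r : ℝ) (p q : ℤ × ℤ) :
    s • e p + r • e q = ((s * p.1 + r * q.1 : ℝ), (s * p.2 + r * q.2 : ℝ)) := by
  apply Prod.ext <;> simp [e]

lemma pair_eq (x1 x2 y1 y2 : ℝ) (h1 : x1 = y1) (h2 : x2 = y2) :
    ((x1, x2) : ℝ × ℝ) = (y1, y2) := by rw [h1, h2]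

lemma e_comb_int (k : ℤ) (g z w : ℤ × ℤ) (h1 : k * g.1 + z.1 = w.1)
    (h2 : k * g.2 + z.2 = w.2) : (k : ℝ) • e g + e z = e w := by
  rw [e_comb]
  have c1 : (k : ℝ) * g.1 + z.1 = (w.1 : ℝ) := by exact_mod_cast h1
  have c2 : (k : ℝ) * g.2 + z.2 = (w.2 : ℝ) := by exact_mod_cast h2
  rw [e, c1, c2]

end

set_option maxHeartbeats 1600000

/-- If a finite convex `S ⊂ ℤ²` has two antiparallel boundary edges `w₁, w₂`,
then every line parallel to `w₁` that meets `S` contains at least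
`min(|w₁ ∩ S|, |w₂ ∩ S|) - 1` integer points of `conv(S)`. -/
theorem statement8 (S : Finset (ℤ × ℤ)) (hconv : IsConvexSet S)
    (p₁ q₁ p₂ q₂ : ℤ × ℤ)
    (h₁ : IsOrientedEdge S p₁ q₁) (h₂ : IsOrientedEdge S p₂ q₂)
    (hanti : PosParallel (q₁ - p₁) (-(q₂ - p₂)))
    (z : ℤ × ℤ) (hz : z ∈ S) :
    min (edgePts S p₁ q₁).card (edgePts S p₂ q₂).card - 1 ≤
      Set.ncard {x : ℤ × ℤ | e x ∈ convexHull ℝ (e '' (S : Set (ℤ × ℤ))) ∧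
        (x.1 - z.1) * (q₁.2 - p₁.2) = (x.2 - z.2) * (q₁.1 - p₁.1)} := by
  classical
  obtain ⟨⟨hpq₁, hp₁S, hq₁S, -⟩, hor₁⟩ := h₁
  obtain ⟨⟨hpq₂, hp₂S, hq₂S, -⟩, hor₂⟩ := h₂
  set H : Set (ℝ × ℝ) := convexHull ℝ (e '' (S : Set (ℤ × ℤ))) with hHdef
  have hmemH : ∀ x ∈ S, e x ∈ H := fun x hx => subset_convexHull ℝ _ ⟨x, hx, rfl⟩
  -- the primitive direction vector g with q₁ - p₁ = d₁ • g
  have hdnat : 0 < Int.gcd (q₁.1 - p₁.1) (q₁.2 - p₁.2) := by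
    rcases Decidable.em (q₁.1 - p₁.1 = 0) with h | h
    · refine Int.gcd_pos_of_ne_zero_right _ ?_
      intro h2
      exact hpq₁ (Prod.ext (by omega) (by omega)).symm
    · exact Int.gcd_pos_of_ne_zero_left _ h
  obtain ⟨d₁, hd₁def, hd₁⟩ : ∃ d : ℤ, d = (Int.gcd (q₁.1 - p₁.1) (q₁.2 - p₁.2) : ℤ) ∧ 0 < d :=
    ⟨_, rfl, by exact_mod_cast hdnat⟩
  obtain ⟨g, hv1, hv2, hgcd⟩ : ∃ g : ℤ × ℤ, q₁.1 - p₁.1 = d₁ * g.1 ∧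
      q₁.2 - p₁.2 = d₁ * g.2 ∧ Int.gcd g.1 g.2 = 1 := by
    refine ⟨((q₁.1 - p₁.1) / d₁, (q₁.2 - p₁.2) / d₁), ?_, ?_, ?_⟩
    · rw [hd₁def]; exact (Int.mul_ediv_cancel' (Int.gcd_dvd_left _ _)).symm
    · rw [hd₁def]; exact (Int.mul_ediv_cancel' (Int.gcd_dvd_right _ _)).symm
    · simp only [hd₁def]; exact Int.gcd_div_gcd_div_gcd hdnat
  have hg0 : g ≠ 0 := by
    intro h; rw [h] at hgcd; simp at hgcd
  have hgor : g.1 ≠ 0 ∨ g.2 ≠ 0 := by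
    by_contra hc; push_neg at hc; exact hg0 (Prod.ext hc.1 hc.2)
  have hgorR : (g.1:ℝ) ≠ 0 ∨ (g.2:ℝ) ≠ 0 := by
    rcases hgor with h | h
    · exact Or.inl (Int.cast_ne_zero.mpr h)
    · exact Or.inr (Int.cast_ne_zero.mpr h)
  -- antiparallel edge gives q₂ - p₂ = -(d₂ • g)
  obtain ⟨t₁, t₂, ht₁, ht₂, hpar⟩ := hanti
  have hpar1 : t₁ * (q₁.1 - p₁.1) + t₂ * (q₂.1 - p₂.1) = 0 := by
    have h := congrArg Prod.fst hpar
    simp only [Prod.smul_fst, Prod.fst_sub, Prod.fst_neg, smul_eq_mul] at h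
    linarith [h]
  have hpar2 : t₁ * (q₁.2 - p₁.2) + t₂ * (q₂.2 - p₂.2) = 0 := by
    have h := congrArg Prod.snd hpar
    simp only [Prod.smul_snd, Prod.snd_sub, Prod.snd_neg, smul_eq_mul] at h
    linarith [h]
  have hlam2 : g.2 * (q₂.1 - p₂.1) = g.1 * (q₂.2 - p₂.2) := by
    have key : t₂ * (g.2 * (q₂.1 - p₂.1) - g.1 * (q₂.2 - p₂.2)) = 0 := by
      linear_combination g.2 * hpar1 - g.1 * hpar2 - t₁ * g.2 * hv1 + t₁ * g.1 * hv2
    rcases mul_eq_zero.mp key with h | h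
    · exact absurd h ht₂.ne'
    · linarith [h]
  obtain ⟨k₂, hk₂1, hk₂2⟩ := prim_int' g hgcd (q₂.1 - p₂.1) (q₂.2 - p₂.2) hlam2
  have ht₂k : t₂ * k₂ = -(t₁ * d₁) := by
    rcases hgor with hgc | hgc
    · apply mul_right_cancel₀ hgc
      linear_combination hpar1 - t₂ * hk₂1 - t₁ * hv1
    · apply mul_right_cancel₀ hgc
      linear_combination hpar2 - t₂ * hk₂2 - t₁ * hv2
  have hk₂neg : k₂ < 0 := by
    by_contra hc; push_neg at hc
    nlinarith [ht₂k, mul_pos ht₁ hd₁, mul_nonneg ht₂.le hc]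
  obtain ⟨d₂, hd₂def, hd₂⟩ : ∃ d : ℤ, d = -k₂ ∧ 0 < d := ⟨-k₂, rfl, by omega⟩
  have hw1 : q₂.1 - p₂.1 = -(d₂ * g.1) := by linear_combination hk₂1 + g.1 * hd₂def
  have hw2 : q₂.2 - p₂.2 = -(d₂ * g.2) := by linear_combination hk₂2 + g.2 * hd₂def
  -- λ bounds on S, where λ x = g.2 * x.1 - g.1 * x.2
  have hub : ∀ x ∈ S, g.2 * x.1 - g.1 * x.2 ≤ g.2 * p₁.1 - g.1 * p₁.2 := by
    intro x hx
    have h := hor₁ x hx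
    rw [hv1, hv2] at h
    by_contra hc; push_neg at hc
    nlinarith [h, mul_pos hd₁ (by linarith :
      (0:ℤ) < (g.2 * x.1 - g.1 * x.2) - (g.2 * p₁.1 - g.1 * p₁.2))]
  have hlb : ∀ x ∈ S, g.2 * p₂.1 - g.1 * p₂.2 ≤ g.2 * x.1 - g.1 * x.2 := by
    intro x hx
    have h := hor₂ x hx
    rw [hw1, hw2] at h
    by_contra hc; push_neg at hc
    nlinarith [h, mul_pos hd₂ (by linarith :
      (0:ℤ) < (g.2 * p₂.1 - g.1 * p₂.2) - (g.2 * x.1 - g.1 * x.2))]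
  -- Claim A: two points of H on the line through z in direction g, at distance ≥ min d₁ d₂
  have claimA : ∃ a b : ℝ, (a • e g + e z ∈ H) ∧ (b • e g + e z ∈ H) ∧
      ((min d₁ d₂ : ℤ) : ℝ) ≤ b - a := by
    have hminR1 : ((min d₁ d₂ : ℤ) : ℝ) ≤ (d₁ : ℝ) := by exact_mod_cast min_le_left d₁ d₂
    have hminR2 : ((min d₁ d₂ : ℤ) : ℝ) ≤ (d₂ : ℝ) := by exact_mod_cast min_le_right d₁ d₂
    by_cases h12 : g.2 * p₁.1 - g.1 * p₁.2 = g.2 * p₂.1 - g.1 * p₂.2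
    · -- degenerate case : both edges on the same line, z on it too
      have hLz : g.2 * z.1 - g.1 * z.2 = g.2 * p₁.1 - g.1 * p₁.2 := by
        refine le_antisymm (hub z hz) ?_
        rw [h12]; exact hlb z hz
      obtain ⟨k₀, hk₀1, hk₀2⟩ := prim_int' g hgcd (z.1 - p₁.1) (z.2 - p₁.2)
        (by linear_combination hLz)
      refine ⟨((-k₀ : ℤ) : ℝ), ((d₁ - k₀ : ℤ) : ℝ), ?_, ?_, ?_⟩
      · have heq : ((-k₀ : ℤ) : ℝ) • e g + e z = e p₁ :=
          e_comb_int (-k₀) g z p₁ (by linear_combination hk₀1) (by linear_combination hk₀2)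
        rw [heq]; exact hmemH p₁ hp₁S
      · have heq : ((d₁ - k₀ : ℤ) : ℝ) • e g + e z = e q₁ :=
          e_comb_int (d₁ - k₀) g z q₁ (by linear_combination hk₀1 - hv1)
            (by linear_combination hk₀2 - hv2)
        rw [heq]; exact hmemH q₁ hq₁S
      · push_cast
        push_cast at hminR1
        linarith [hminR1]
    · -- non-degenerate case : cut the trapezoid at the level of z
      obtain ⟨L1, hL1⟩ : ∃ n : ℤ, g.2 * p₁.1 - g.1 * p₁.2 = n := ⟨_, rfl⟩
      obtain ⟨L2, hL2⟩ : ∃ n : ℤ, g.2 * p₂.1 - g.1 * p₂.2 = n := ⟨_, rfl⟩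
      obtain ⟨Lz, hLz⟩ : ∃ n : ℤ, g.2 * z.1 - g.1 * z.2 = n := ⟨_, rfl⟩
      have hz1 : Lz ≤ L1 := by rw [← hL1, ← hLz]; exact hub z hz
      have hz2 : L2 ≤ Lz := by rw [← hL2, ← hLz]; exact hlb z hz
      have hlt : L2 < L1 := by
        have h21 : L2 ≤ L1 := by rw [← hL1, ← hL2]; exact hub p₂ hp₂S
        rcases lt_or_eq_of_le h21 with h | h
        · exact h
        · exact absurd (by rw [hL1, hL2, h]) h12
      have hden : (0:ℝ) < (L1:ℝ) - L2 := by
        exact_mod_cast (show (0:ℤ) < L1 - L2 by omega)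
      obtain ⟨t, htdef⟩ : ∃ t : ℝ, t = ((L1:ℝ) - Lz) / ((L1:ℝ) - L2) := ⟨_, rfl⟩
      have ht0 : 0 ≤ t := by
        rw [htdef]
        apply div_nonneg _ hden.le
        exact_mod_cast (show (0:ℤ) ≤ L1 - Lz by omega)
      have ht1 : t ≤ 1 := by
        rw [htdef]
        rw [div_le_one hden]
        exact_mod_cast (show (L1:ℤ) - Lz ≤ L1 - L2 by omega)
      have htmul : t * ((L1:ℝ) - L2) = (L1:ℝ) - Lz := by
        rw [htdef]; field_simp
      have hA : (1-t) • e p₁ + t • e q₂ ∈ H :=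
        (convex_convexHull ℝ _) (hmemH p₁ hp₁S) (hmemH q₂ hq₂S) (by linarith) ht0 (by ring)
      have hB : (1-t) • e q₁ + t • e p₂ ∈ H :=
        (convex_convexHull ℝ _) (hmemH q₁ hq₁S) (hmemH p₂ hp₂S) (by linarith) ht0 (by ring)
      -- real cast facts
      have hL1R : (g.2:ℝ) * p₁.1 - (g.1:ℝ) * p₁.2 = (L1:ℝ) := by exact_mod_cast hL1
      have hL2R : (g.2:ℝ) * p₂.1 - (g.1:ℝ) * p₂.2 = (L2:ℝ) := by exact_mod_cast hL2
      have hLzR : (g.2:ℝ) * z.1 - (g.1:ℝ) * z.2 = (Lz:ℝ) := by exact_mod_cast hLz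
      have hv1R : (q₁.1:ℝ) - p₁.1 = (d₁:ℝ) * g.1 := by exact_mod_cast hv1
      have hv2R : (q₁.2:ℝ) - p₁.2 = (d₁:ℝ) * g.2 := by exact_mod_cast hv2
      have hw1R : (q₂.1:ℝ) - p₂.1 = -((d₂:ℝ) * g.1) := by exact_mod_cast hw1
      have hw2R : (q₂.2:ℝ) - p₂.2 = -((d₂:ℝ) * g.2) := by exact_mod_cast hw2
      obtain ⟨a, ha1, ha2⟩ := prim_real' g hg0
        ((1-t) * p₁.1 + t * q₂.1 - z.1) ((1-t) * p₁.2 + t * q₂.2 - z.2)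
        (by linear_combination (1-t) * hL1R + t * hL2R - hLzR
              + t * (g.2:ℝ) * hw1R - t * (g.1:ℝ) * hw2R - htmul)
      obtain ⟨b, hb1, hb2⟩ := prim_real' g hg0
        ((1-t) * q₁.1 + t * p₂.1 - z.1) ((1-t) * q₁.2 + t * p₂.2 - z.2)
        (by linear_combination (1-t) * hL1R + (1-t) * (g.2:ℝ) * hv1R
              - (1-t) * (g.1:ℝ) * hv2R + t * hL2R - hLzR - htmul)
      refine ⟨a, b, ?_, ?_, ?_⟩
      · have heq : a • e g + e z = (1-t) • e p₁ + t • e q₂ := by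
          rw [e_comb, comb2]
          exact pair_eq _ _ _ _ (by linarith [ha1]) (by linarith [ha2])
        rw [heq]; exact hA
      · have heq : b • e g + e z = (1-t) • e q₁ + t • e p₂ := by
          rw [e_comb, comb2]
          exact pair_eq _ _ _ _ (by linarith [hb1]) (by linarith [hb2])
        rw [heq]; exact hB
      · have hba : b - a = (1-t) * d₁ + t * d₂ := by
          rcases hgorR with hgc | hgc
          · apply mul_right_cancel₀ hgc
            linear_combination ha1 - hb1 + (1-t) * hv1R - t * hw1R
          · apply mul_right_cancel₀ hgc
            linear_combination ha2 - hb2 + (1-t) * hv2R - t * hw2R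
        rw [hba]
        rcases le_total (d₁:ℝ) (d₂:ℝ) with h | h
        · linarith [hminR1, mul_nonneg ht0 (by linarith : (0:ℝ) ≤ (d₂:ℝ) - d₁)]
        · linarith [hminR2, mul_nonneg (by linarith : (0:ℝ) ≤ 1 - t)
            (by linarith : (0:ℝ) ≤ (d₁:ℝ) - d₂)]
  -- use Claim A to produce many lattice points
  obtain ⟨a, b, haH, hbH, hab⟩ := claimA
  obtain ⟨a', ha'def⟩ : ∃ x : ℝ, x = min a (min b 0) := ⟨_, rfl⟩
  obtain ⟨b', hb'def⟩ : ∃ x : ℝ, x = max a (max b 0) := ⟨_, rfl⟩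
  have ha'le : a' ≤ 0 := by rw [ha'def]; exact le_trans (min_le_right _ _) (min_le_right _ _)
  have hb'ge : 0 ≤ b' := by rw [hb'def]; exact le_trans (le_max_right _ _) (le_max_right _ _)
  have ha'a : a' ≤ a := by rw [ha'def]; exact min_le_left _ _
  have hb'b : b ≤ b' := by rw [hb'def]; exact le_trans (le_max_left _ _) (le_max_right _ _)
  have h0H : (0:ℝ) • e g + e z ∈ H := by simpa using hmemH z hz
  have ha'H : a' • e g + e z ∈ H := by
    rcases min_choice a (min b 0) with h | h
    · rw [ha'def, h]; exact haH
    · rcases min_choice b 0 with h' | h'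
      · rw [ha'def, h, h']; exact hbH
      · rw [ha'def, h, h']; exact h0H
  have hb'H : b' • e g + e z ∈ H := by
    rcases max_choice a (max b 0) with h | h
    · rw [hb'def, h]; exact haH
    · rcases max_choice b 0 with h' | h'
      · rw [hb'def, h, h']; exact hbH
      · rw [hb'def, h, h']; exact h0H
  have hIcc : ∀ s : ℝ, a' ≤ s → s ≤ b' → s • e g + e z ∈ H := by
    intro s hs1 hs2
    have hconvH : Convex ℝ H := convex_convexHull ℝ _
    obtain ⟨f, hf⟩ : ∃ f : ℝ →ᵃ[ℝ] ℝ × ℝ, ∀ u : ℝ, f u = u • e g + e z := by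
      refine ⟨AffineMap.lineMap (e z) (e z + e g), fun u => ?_⟩
      simp [AffineMap.lineMap_apply]; try abel
    have hpre : Convex ℝ (f ⁻¹' H) := hconvH.affine_preimage f
    have h1 : a' ∈ f ⁻¹' H := by
      show f a' ∈ H; rw [hf]; exact ha'H
    have h2 : b' ∈ f ⁻¹' H := by
      show f b' ∈ H; rw [hf]; exact hb'H
    have h3 := hpre.ordConnected.out h1 h2 ⟨hs1, hs2⟩
    rw [Set.mem_preimage, hf] at h3
    exact h3
  obtain ⟨T, hTdef⟩ : ∃ T : Set ℤ, T = {k : ℤ | (k:ℝ) • e g + e z ∈ H} := ⟨_, rfl⟩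
  have hegne : e g ≠ 0 := by
    intro h
    apply hg0
    have h1 := congrArg Prod.fst h
    have h2 := congrArg Prod.snd h
    simp only [e, Prod.fst_zero, Prod.snd_zero] at h1 h2
    exact Prod.ext (by exact_mod_cast h1) (by exact_mod_cast h2)
  have hegpos : 0 < ‖e g‖ := norm_pos_iff.mpr hegne
  have hHcompact : IsCompact H := (S.finite_toSet.image e).isCompact_convexHull ℝ
  obtain ⟨R, hR⟩ := hHcompact.isBounded.subset_closedBall 0
  have hTfin : T.Finite := by
    apply Set.Finite.subset (Set.finite_Icc (-(⌈(R + ‖e z‖)/‖e g‖⌉)) ⌈(R + ‖e z‖)/‖e g‖⌉)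
    intro k hk
    rw [hTdef, Set.mem_setOf_eq] at hk
    have hk' := hR hk
    rw [Metric.mem_closedBall, dist_zero_right] at hk'
    have h1 : ‖(k:ℝ) • e g‖ ≤ R + ‖e z‖ := by
      have h2 : (k:ℝ) • e g = ((k:ℝ) • e g + e z) - e z := by abel
      rw [h2]
      exact le_trans (norm_sub_le _ _) (by linarith)
    rw [norm_smul, Real.norm_eq_abs] at h1
    have h2 : |(k:ℝ)| ≤ (R + ‖e z‖)/‖e g‖ := (le_div_iff₀ hegpos).mpr h1
    obtain ⟨h3, h4⟩ := abs_le.mp h2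
    rw [Set.mem_Icc]
    constructor
    · have h5 : ((-(⌈(R + ‖e z‖)/‖e g‖⌉) : ℤ) : ℝ) ≤ (k:ℝ) := by
        push_cast
        linarith [Int.le_ceil ((R + ‖e z‖)/‖e g‖)]
      exact_mod_cast h5
    · have h5 : (k:ℝ) ≤ ((⌈(R + ‖e z‖)/‖e g‖⌉ : ℤ) : ℝ) := by
        linarith [Int.le_ceil ((R + ‖e z‖)/‖e g‖)]
      exact_mod_cast h5
  obtain ⟨n₁, hn₁def⟩ : ∃ n : ℤ, n = ⌈a'⌉ := ⟨_, rfl⟩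
  obtain ⟨n₂, hn₂def⟩ : ∃ n : ℤ, n = ⌊b'⌋ := ⟨_, rfl⟩
  have hn₁ : n₁ ≤ 0 := by
    rw [hn₁def]
    exact Int.ceil_le.mpr (by exact_mod_cast ha'le)
  have hn₂ : 0 ≤ n₂ := by
    rw [hn₂def]
    exact Int.le_floor.mpr (by exact_mod_cast hb'ge)
  have hIccsub : ↑(Finset.Icc n₁ n₂) ⊆ T := by
    intro k hk
    simp only [Finset.coe_Icc, Set.mem_Icc] at hk
    rw [hTdef, Set.mem_setOf_eq]
    refine hIcc k ?_ ?_
    · calc a' ≤ (n₁:ℝ) := by rw [hn₁def]; exact Int.le_ceil a'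
        _ ≤ k := by exact_mod_cast hk.1
    · calc (k:ℝ) ≤ (n₂:ℝ) := by exact_mod_cast hk.2
        _ ≤ b' := by rw [hn₂def]; exact Int.floor_le b'
  have hcard : (Finset.Icc n₁ n₂).card ≤ T.ncard := by
    rw [← Set.ncard_coe_finset]
    exact Set.ncard_le_ncard hIccsub hTfin
  have hfloor : min d₁ d₂ ≤ n₂ - n₁ + 1 := by
    have hf1 : min d₁ d₂ ≤ ⌊b' - a'⌋ := by
      apply Int.le_floor.mpr
      have : b - a ≤ b' - a' := by linarith
      linarith [hab]
    have hf2 : ⌊b' - a'⌋ ≤ n₂ - n₁ + 1 := by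
      have hb'lt : b' < (n₂:ℝ) + 1 := by rw [hn₂def]; exact Int.lt_floor_add_one b'
      have ha'gt : (n₁:ℝ) - 1 < a' := by
        rw [hn₁def]; linarith [Int.ceil_lt_add_one a']
      have h6 : b' - a' < ((n₂ - n₁ + 2 : ℤ):ℝ) := by push_cast; linarith
      have h7 := Int.floor_lt.mpr h6
      omega
    omega
  have hTcard : (min d₁ d₂).toNat ≤ T.ncard := by
    have hc : (Finset.Icc n₁ n₂).card = (n₂ + 1 - n₁).toNat := by rw [Int.card_Icc]
    omega
  -- the target set is the image of T
  have htar : {x : ℤ × ℤ | e x ∈ H ∧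
      (x.1 - z.1) * (q₁.2 - p₁.2) = (x.2 - z.2) * (q₁.1 - p₁.1)}
      = (fun k : ℤ => ((z.1 + k * g.1, z.2 + k * g.2) : ℤ × ℤ)) '' T := by
    ext x
    simp only [Set.mem_setOf_eq, Set.mem_image]
    constructor
    · rintro ⟨hxH, hxl⟩
      rw [hv1, hv2] at hxl
      have hxl' : g.2 * (x.1 - z.1) = g.1 * (x.2 - z.2) :=
        mul_left_cancel₀ (ne_of_gt hd₁) (by linear_combination hxl)
      obtain ⟨k, hk1, hk2⟩ := prim_int' g hgcd (x.1 - z.1) (x.2 - z.2) hxl'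
      refine ⟨k, ?_, ?_⟩
      · rw [hTdef, Set.mem_setOf_eq]
        have heq : (k:ℝ) • e g + e z = e x :=
          e_comb_int k g z x (by linear_combination -hk1) (by linear_combination -hk2)
        rw [heq]; exact hxH
      · apply Prod.ext
        · show z.1 + k * g.1 = x.1
          linarith [hk1]
        · show z.2 + k * g.2 = x.2
          linarith [hk2]
    · rintro ⟨k, hkT, rfl⟩
      rw [hTdef, Set.mem_setOf_eq] at hkT
      constructor
      · have heq : (k:ℝ) • e g + e z = e ((z.1 + k * g.1, z.2 + k * g.2) : ℤ × ℤ) :=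
          e_comb_int k g z _ (by show k * g.1 + z.1 = z.1 + k * g.1; ring)
            (by show k * g.2 + z.2 = z.2 + k * g.2; ring)
        rw [← heq]; exact hkT
      · show (z.1 + k * g.1 - z.1) * (q₁.2 - p₁.2) = (z.2 + k * g.2 - z.2) * (q₁.1 - p₁.1)
        rw [hv1, hv2]; ring
  rw [htar]
  have hinj : Function.Injective (fun k : ℤ => ((z.1 + k * g.1, z.2 + k * g.2) : ℤ × ℤ)) := by
    intro k1 k2 hk
    simp only [Prod.mk.injEq] at hk
    rcases hgor with hgc | hgc
    · have h : k1 * g.1 = k2 * g.1 := by linarith [hk.1]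
      exact mul_right_cancel₀ hgc h
    · have h : k1 * g.2 = k2 * g.2 := by linarith [hk.2]
      exact mul_right_cancel₀ hgc h
  rw [Set.ncard_image_of_injective T hinj]
  have hc1 : (edgePts S p₁ q₁).card ≤ d₁.toNat + 1 :=
    edge_card_le S p₁ q₁ g hgcd d₁ hd₁ hv1 hv2
  have hc2 : (edgePts S p₂ q₂).card ≤ d₂.toNat + 1 := by
    refine edge_card_le S p₂ q₂ (-g.1, -g.2) ?_ d₂ hd₂ ?_ ?_
    · show Int.gcd (-g.1) (-g.2) = 1
      rw [Int.neg_gcd, Int.gcd_neg]; exact hgcd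
    · show q₂.1 - p₂.1 = d₂ * (-g.1)
      linarith [hw1]
    · show q₂.2 - p₂.2 = d₂ * (-g.2)
      linarith [hw2]
  omega


end Nivat
end

section
/- Fix nonzero vectors v₁, …, v_m ∈ ℤ² and n ∈ ℕ. There exists A ∈ ℕ such that every finite convex set S ⊂ ℤ² containing at least A integer points, all of whose boundary edges are parallel to one of v₁, …, v_m, has a boundary edge containing at least n integer points. -/
open Classical

namespace Nivat

/-- cross product -/
def cr (a b : ℤ × ℤ) : ℤ := a.1 * b.2 - a.2 * b.1
/-- dot product -/
def dt (a b : ℤ × ℤ) : ℤ := a.1 * b.1 + a.2 * b.2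

lemma lagrange (a b : ℤ × ℤ) : dt a b ^ 2 + cr a b ^ 2 = dt a a * dt b b := by
  simp only [dt, cr]; ring

lemma dt_nonneg_self (a : ℤ × ℤ) : 0 ≤ dt a a := by
  simp only [dt]; nlinarith [sq_nonneg a.1, sq_nonneg a.2]

lemma eq_zero_of_dt_self {a : ℤ × ℤ} (h : dt a a = 0) : a = 0 := by
  simp only [dt] at h
  have h1 : a.1 = 0 := by nlinarith [sq_nonneg a.1, sq_nonneg a.2, mul_self_nonneg a.1, mul_self_nonneg a.2]
  have h2 : a.2 = 0 := by nlinarith [mul_self_nonneg a.1, mul_self_nonneg a.2]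
  exact Prod.ext h1 h2

lemma dt_pos_self {a : ℤ × ℤ} (ha : a ≠ 0) : 0 < dt a a :=
  lt_of_le_of_ne (dt_nonneg_self a) (fun h => ha (eq_zero_of_dt_self h.symm))

lemma eq_zero_of_dt_cr {a b : ℤ × ℤ} (ha : a ≠ 0) (h1 : cr a b = 0) (h2 : dt a b = 0) :
    b = 0 := by
  have hL := lagrange a b
  rw [h1, h2] at hL
  have haa := dt_pos_self ha
  have : dt b b = 0 := by nlinarith [dt_nonneg_self b]
  exact eq_zero_of_dt_self this

/-- if cr a b = 0 then (dt a a) • b = (dt a b) • a, componentwise. -/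
lemma scale1 {a b : ℤ × ℤ} (h : cr a b = 0) : dt a a * b.1 = dt a b * a.1 := by
  simp only [dt, cr] at *; linear_combination (-a.2) * h
lemma scale2 {a b : ℤ × ℤ} (h : cr a b = 0) : dt a a * b.2 = dt a b * a.2 := by
  simp only [dt, cr] at *; linear_combination (a.1) * h

/-- cr version: cr a b = 0 → dt a a * cr b z = dt a b * cr a z -/
lemma scale_cr {a b : ℤ × ℤ} (h : cr a b = 0) (z : ℤ × ℤ) :
    dt a a * cr b z = dt a b * cr a z := by
  simp only [dt, cr] at *; linear_combination (-z.2 * a.2 - z.1 * a.1) * h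

lemma scale_dt {a b : ℤ × ℤ} (h : cr a b = 0) (z : ℤ × ℤ) :
    dt a a * dt b z = dt a b * dt a z := by
  simp only [dt, cr] at *; linear_combination (z.2 * a.1 - z.1 * a.2) * h

/-- Cramer identity: cr a b * t = cr t b • a + cr a t • b -/
lemma cramer1 (a b t : ℤ × ℤ) : cr a b * t.1 = cr t b * a.1 + cr a t * b.1 := by
  simp only [cr]; ring
lemma cramer2 (a b t : ℤ × ℤ) : cr a b * t.2 = cr t b * a.2 + cr a t * b.2 := by
  simp only [cr]; ring

lemma cramer_dt (a b t z : ℤ × ℤ) :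
    cr a b * dt z t = cr t b * dt z a + cr a t * dt z b := by
  simp only [cr, dt]; ring

/-- parallel transitivity: a ∥ v, b ∥ v, v ≠ 0 ⇒ a ∥ b -/
lemma cr_trans {a b vv : ℤ × ℤ} (hv : vv ≠ 0) (h1 : cr a vv = 0) (h2 : cr b vv = 0) :
    cr a b = 0 := by
  have k1 : cr a b * vv.1 = 0 := by simp only [cr] at *; linear_combination b.1 * h1 - a.1 * h2
  have k2 : cr a b * vv.2 = 0 := by simp only [cr] at *; linear_combination b.2 * h1 - a.2 * h2
  by_contra h
  apply hv
  exact Prod.ext (by exact (mul_eq_zero.mp k1).resolve_left h) ((mul_eq_zero.mp k2).resolve_left h)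

/-- Binet-Cauchy: dt a c * dt b d - dt a d * dt b c = cr a b * cr c d -/
lemma binet (a b c d : ℤ × ℤ) :
    dt a c * dt b d - dt a d * dt b c = cr a b * cr c d := by
  simp only [cr, dt]; ring



lemma dt_split (a s p w : ℤ × ℤ) : dt a (s - w) = dt a (s - p) + dt a (p - w) := by
  simp only [dt, Prod.fst_sub, Prod.snd_sub]; ring
lemma cr_neg_right (a b : ℤ × ℤ) : cr a (-b) = - cr a b := by
  simp only [cr, Prod.fst_neg, Prod.snd_neg]; ring
lemma dt_neg_right (a b : ℤ × ℤ) : dt a (-b) = - dt a b := by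
  simp only [dt, Prod.fst_neg, Prod.snd_neg]; ring

/-- halfplane condition -/
def Hc (d w : ℤ × ℤ) : Prop := 0 < cr d w ∨ (cr d w = 0 ∧ dt d w < 0)
/-- angular order -/
def Rc (a b : ℤ × ℤ) : Prop := 0 < cr a b ∨ (cr a b = 0 ∧ 0 < dt a b)

lemma hc_ne_zero {d w : ℤ × ℤ} (h : Hc d w) : w ≠ 0 := by
  rintro rfl
  simp only [Hc, cr, dt] at h
  simp at h

lemma hc_d_ne_zero {d w : ℤ × ℤ} (h : Hc d w) : d ≠ 0 := by
  rintro rfl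
  simp only [Hc, cr, dt] at h
  simp at h

lemma cr_anticomm (a b : ℤ × ℤ) : cr a b = - cr b a := by simp only [cr]; ring
lemma dt_comm (a b : ℤ × ℤ) : dt a b = dt b a := by simp only [dt]; ring

/-- two vectors in the halfplane that are parallel are positively parallel -/
lemma hc_parallel_pos {d u w : ℤ × ℤ} (hu : Hc d u) (hw : Hc d w) (hc : cr u w = 0) :
    0 < dt u w := by
  have huNe := hc_ne_zero hu
  have hwNe := hc_ne_zero hw
  have hdw_nonneg : 0 ≤ cr d w := by rcases hw with h | ⟨h, _⟩; omega; omega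
  rcases lt_trichotomy (dt u w) 0 with hlt | heq | hgt
  · exfalso
    rcases hu with h1 | ⟨h1, h1'⟩
    · -- u interior: dt u u * cr w d = dt u w * cr u d
      have := scale_cr hc d
      -- dt u u * cr w d = dt u w * cr u d
      have hcd : cr u d = - cr d u := cr_anticomm u d
      have hwd : cr w d = - cr d w := cr_anticomm w d
      have h2 : dt u u * cr d w = dt u w * cr d u := by
        rw [hcd, hwd] at this; linarith
      have huu := dt_pos_self huNe
      nlinarith
    · -- u boundary: cr d u = 0, dt d u < 0
      have hdw0 : cr d w = 0 := by
        exact cr_trans huNe h1 (by rw [cr_anticomm w u]; omega : cr w u = 0)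
      have hdtw : dt d w < 0 := by rcases hw with h | ⟨h, h'⟩; omega; exact h'
      -- scale_dt a := u, b := w : dt u u * dt w z = dt u w * dt u z, z := d
      have h3 := scale_dt hc d
      have huu := dt_pos_self huNe
      -- also relate dt u d to dt d u
      rw [dt_comm u d] at h3
      -- need dt w d vs dt d w
      rw [dt_comm w d] at h3
      -- h3 : dt u u * dt d w = dt u w * dt d u
      nlinarith
  · exact absurd (eq_zero_of_dt_cr huNe hc heq) hwNe
  · exact hgt

lemma rc_refl {d w : ℤ × ℤ} (h : Hc d w) : Rc w w :=
  Or.inr ⟨by simp [cr]; ring, dt_pos_self (hc_ne_zero h)⟩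

lemma rc_total {d u w : ℤ × ℤ} (hu : Hc d u) (hw : Hc d w) (h : ¬ Rc u w) : Rc w u := by
  simp only [Rc, not_or, not_and_or, not_lt] at h
  obtain ⟨h1, h2⟩ := h
  rcases lt_or_eq_of_le h1 with hlt | heq
  · left; rw [cr_anticomm w u]; omega
  · exfalso
    have heq' : cr u w = 0 := by omega
    have := hc_parallel_pos hu hw heq'
    rcases h2 with h2 | h2
    · exact h2 heq'
    · omega

lemma plucker (a b c d : ℤ × ℤ) :
    cr a c * cr d b = cr a b * cr d c + cr d a * cr b c := by
  simp only [cr]; ring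

lemma cr_nonneg_of_hc {d w : ℤ × ℤ} (h : Hc d w) : 0 ≤ cr d w := by
  rcases h with h | ⟨h, _⟩; omega; omega

lemma rc_trans {d a b c : ℤ × ℤ} (ha : Hc d a) (hb : Hc d b) (hc : Hc d c)
    (h1 : Rc a b) (h2 : Rc b c) : Rc a c := by
  have hdne := hc_d_ne_zero hb
  rcases hb with hbI | ⟨hb0, hbneg⟩
  · -- b interior
    have key := plucker a b c d  -- cr a c * cr d b = cr a b * cr d c + cr d a * cr b c
    have s1 : 0 ≤ cr a b := by rcases h1 with h|⟨h,_⟩; omega; omega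
    have s2 : 0 ≤ cr b c := by rcases h2 with h|⟨h,_⟩; omega; omega
    have s3 : 0 ≤ cr d c := cr_nonneg_of_hc hc
    have s4 : 0 ≤ cr d a := cr_nonneg_of_hc ha
    have hac : 0 ≤ cr a c := by nlinarith
    rcases lt_or_eq_of_le hac with h | h
    · exact Or.inl h
    · exact Or.inr ⟨h.symm, hc_parallel_pos ha hc h.symm⟩
  · -- b boundary
    rcases hc with hcI | ⟨hc0, hcneg⟩
    · -- c interior: R b c impossible
      exfalso
      have h3 := scale_cr hb0 c  -- dt d d * cr b c = dt d b * cr d c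
      have hdd := dt_pos_self hdne
      have : cr b c < 0 := by nlinarith
      rcases h2 with h|⟨h,_⟩; omega; omega
    · -- c boundary
      rcases ha with haI | ⟨ha0, haneg⟩
      · -- a interior
        left
        have h3 := scale_cr hc0 a  -- dt d d * cr c a = dt d c * cr d a
        have hdd := dt_pos_self (hc_d_ne_zero (Or.inr ⟨hb0, hbneg⟩))
        have : cr c a < 0 := by nlinarith
        rw [cr_anticomm a c]; omega
      · -- a boundary
        right
        have hac : cr a c = 0 := cr_trans hdne
          (by rw [cr_anticomm a d]; omega) (by rw [cr_anticomm c d]; omega)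
        refine ⟨hac, ?_⟩
        have h3 := scale_dt ha0 c  -- dt d d * dt a c = dt d a * dt d c
        have hdd := dt_pos_self hdne
        nlinarith

/-- angular minimum exists -/
lemma ang_min {d : ℤ × ℤ} (W : Finset (ℤ × ℤ)) (hW : W.Nonempty)
    (hH : ∀ w ∈ W, Hc d w) : ∃ w₀ ∈ W, ∀ w ∈ W, Rc w₀ w := by
  classical
  revert hW hH
  induction W using Finset.induction_on with
  | empty => intro hW _; exact absurd hW (by simp)
  | @insert a W' ha IH =>
    intro _ hH
    rcases W'.eq_empty_or_nonempty with rfl | hne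
    · refine ⟨a, by simp, fun w hw => ?_⟩
      have hwa : w = a := by simpa using hw
      rw [hwa]; exact rc_refl (hH a (by simp))
    · obtain ⟨w₀, hw₀, hmin⟩ := IH hne (fun w hw => hH w (Finset.mem_insert_of_mem hw))
      by_cases hcase : Rc w₀ a
      · exact ⟨w₀, Finset.mem_insert_of_mem hw₀, fun w hw => by
          rcases Finset.mem_insert.mp hw with rfl | hw
          · exact hcase
          · exact hmin w hw⟩
      · have hHa := hH a (Finset.mem_insert_self a W')
        have hHw₀ := hH w₀ (Finset.mem_insert_of_mem hw₀)
        have haw₀ : Rc a w₀ := rc_total hHw₀ hHa hcase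
        exact ⟨a, Finset.mem_insert_self a W', fun w hw => by
          rcases Finset.mem_insert.mp hw with rfl | hw
          · exact rc_refl hHa
          · exact rc_trans hHa hHw₀ (hH w (Finset.mem_insert_of_mem hw)) haw₀ (hmin w hw)⟩

-- arithmetic helpers
lemma cr_sub_right (a b c : ℤ × ℤ) : cr a (b - c) = cr a b - cr a c := by
  simp only [cr, Prod.fst_sub, Prod.snd_sub]; ring
lemma dt_sub_right (a b c : ℤ × ℤ) : dt a (b - c) = dt a b - dt a c := by
  simp only [dt, Prod.fst_sub, Prod.snd_sub]; ring
lemma cr_zero_right (a : ℤ × ℤ) : cr a 0 = 0 := by simp [cr]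
lemma dt_zero_right (a : ℤ × ℤ) : dt a 0 = 0 := by simp [dt]
lemma cr_self (a : ℤ × ℤ) : cr a a = 0 := by simp only [cr]; ring
lemma cr_anticomm' (a b : ℤ × ℤ) : cr a b = - cr b a := by simp only [cr]; ring
lemma dt_comm' (a b : ℤ × ℤ) : dt a b = dt b a := by simp only [dt]; ring

/-- an oriented boundary edge of S, with all of S weakly on one side,
and x, y the extreme lattice points on its line. -/
def OEdge (S : Finset (ℤ × ℤ)) (x y : ℤ × ℤ) : Prop :=
  x ∈ S ∧ y ∈ S ∧ x ≠ y ∧ (∀ s ∈ S, 0 ≤ cr (y - x) (s - x)) ∧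
  (∀ s ∈ S, cr (y - x) (s - x) = 0 →
    0 ≤ dt (y - x) (s - x) ∧ dt (y - x) (s - x) ≤ dt (y - x) (y - x))

lemma oedge_d_ne {S : Finset (ℤ × ℤ)} {x y : ℤ × ℤ} (h : OEdge S x y) : y - x ≠ 0 :=
  fun hc => h.2.2.1 (by have := sub_eq_zero.mp hc; exact this.symm)

/-- (G): oriented edges with positively parallel directions coincide -/
lemma oedge_dir_unique {S : Finset (ℤ × ℤ)} {x y x' y' : ℤ × ℤ}
    (e1 : OEdge S x y) (e2 : OEdge S x' y')
    (hpar : cr (y - x) (y' - x') = 0) (hpos : 0 < dt (y - x) (y' - x')) :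
    x = x' ∧ y = y' := by
  obtain ⟨hx1, hy1, hne1, hside1, hcol1⟩ := e1
  obtain ⟨hx2, hy2, hne2, hside2, hcol2⟩ := e2
  set d := y - x with hd
  set d' := y' - x' with hd'
  have hdne : d ≠ 0 := sub_ne_zero.mpr (Ne.symm hne1)
  have hdd : 0 < dt d d := dt_pos_self hdne
  -- decomposition: cr d (y'-x) = cr d d' + cr d (x'-x)
  have hdecomp : cr d (y' - x) = cr d d' + cr d (x' - x) := by
    have : (y' - x) = d' + (x' - x) := by rw [hd']; abel
    rw [this]
    simp only [cr, Prod.fst_add, Prod.snd_add]; ring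
  have hA : 0 ≤ cr d (x' - x) := hside1 x' hx2
  have hB : 0 ≤ cr d' (x - x') := hside2 x hx1
  -- scale: dt d d * cr d' z = dt d d' * cr d z
  have hS := scale_cr hpar
  have h1 : dt d d * cr d' (x - x') = dt d d' * cr d (x - x') := hS (x - x')
  have hcxx : cr d (x - x') = - cr d (x' - x) := by
    rw [show (x - x') = -(x' - x) by abel]
    simp only [cr, Prod.fst_neg, Prod.snd_neg]; ring
  have hxx0 : cr d (x' - x) = 0 := by nlinarith
  have hcd'xx : cr d' (x - x') = 0 := by nlinarith
  -- dt comparisons for x, x'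
  have hD1 := hcol1 x' hx2 hxx0
  have hD2 := hcol2 x hx1 hcd'xx
  have h2 : dt d d * dt d' (x - x') = dt d d' * dt d (x - x') := scale_dt hpar (x - x')
  have hdtxx : dt d (x - x') = - dt d (x' - x) := by
    rw [show (x - x') = -(x' - x) by abel]
    simp only [dt, Prod.fst_neg, Prod.snd_neg]; ring
  have hxeq : x = x' := by
    have hle : 0 ≤ dt d (x' - x) := hD1.1
    have : dt d (x' - x) ≤ 0 := by nlinarith [hD2.1]
    have hz : dt d (x' - x) = 0 := le_antisymm this hle
    have := eq_zero_of_dt_cr hdne hxx0 hz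
    have := sub_eq_zero.mp this
    exact this.symm
  -- now y = y'
  subst hxeq
  have hd'2 : d' = y' - x := rfl
  have hcyy : cr d (y' - x) = 0 := by
    rw [hdecomp, hpar]
    simp only [cr]
    have : cr d (x - x) = 0 := by rw [sub_self]; exact cr_zero_right d
    simp only [cr] at this; omega
  have hE1 := hcol1 y' hy2 hcyy
  -- dt d d' ≤ dt d d
  have hup1 : dt d d' ≤ dt d d := hE1.2
  -- from edge 2 at y : 0 ≤ dt d' (y - x) ≤ dt d' d'
  have hcyd' : cr d' (y - x) = 0 := by
    have := scale_cr hpar (y - x)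
    have hcr : cr d (y - x) = cr d d := rfl
    rw [hcr, cr_self] at this
    nlinarith
  have hE2 := hcol2 y hy1 hcyd'
  -- dt d' d ≤ dt d' d'
  have hup2 : dt d' (y - x) ≤ dt d' d' := hE2.2
  have hdd'_eq : dt d d = dt d d' := by
    -- dt d d * dt d' d = dt d d' * dt d d  and  dt d d * dt d' d' = dt d d' * dt d d'
    have k1 := scale_dt hpar d
    have k2 := scale_dt hpar d'
    have hdtd'd : dt d' (y - x) = dt d' d := rfl
    rw [hdtd'd] at hup2
    nlinarith
  have : dt d (d' - d) = 0 := by rw [dt_sub_right]; omega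
  have hcr0 : cr d (d' - d) = 0 := by rw [cr_sub_right, cr_self]; omega
  have := eq_zero_of_dt_cr hdne hcr0 this
  have hdd' : d' = d := by have := sub_eq_zero.mp this; exact this
  constructor
  · rfl
  · have : y' - x = y - x := hdd'
    have := sub_left_injective this
    exact this.symm

/-- (E): out-edges are unique -/
lemma oedge_out_unique {S : Finset (ℤ × ℤ)} {x y y' : ℤ × ℤ}
    (e1 : OEdge S x y) (e2 : OEdge S x y') : y = y' := by
  have hcr1 : 0 ≤ cr (y - x) (y' - x) := e1.2.2.2.1 y' e2.2.1
  have hcr2 : 0 ≤ cr (y' - x) (y - x) := e2.2.2.2.1 y e1.2.1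
  have h0 : cr (y - x) (y' - x) = 0 := by
    have := cr_anticomm' (y - x) (y' - x); omega
  have hdt := (e1.2.2.2.2 y' e2.2.1 h0).1
  have hpos : 0 < dt (y - x) (y' - x) := by
    rcases lt_or_eq_of_le hdt with h | h
    · exact h
    · exfalso
      exact oedge_d_ne e2 (eq_zero_of_dt_cr (oedge_d_ne e1) h0 h.symm)
  exact (oedge_dir_unique e1 e2 h0 hpos).2

/-- (F): in-edges are unique -/
lemma oedge_in_unique {S : Finset (ℤ × ℤ)} {x x' y : ℤ × ℤ}
    (e1 : OEdge S x y) (e2 : OEdge S x' y) : x = x' := by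
  have hxx' : x' - x = (y - x) - (y - x') := by abel
  have hx'x : x - x' = (y - x') - (y - x) := by abel
  have h1 : 0 ≤ cr (y - x) (x' - x) := e1.2.2.2.1 x' e2.1
  have h2 : 0 ≤ cr (y - x') (x - x') := e2.2.2.2.1 x e1.1
  rw [hxx', cr_sub_right, cr_self] at h1
  rw [hx'x, cr_sub_right, cr_self] at h2
  have hanti := cr_anticomm' (y - x) (y - x')
  have h0 : cr (y - x) (y - x') = 0 := by omega
  have h0' : cr (y - x) (x' - x) = 0 := by rw [hxx', cr_sub_right, cr_self]; omega
  have hdt := (e1.2.2.2.2 x' e2.1 h0').2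
  rw [hxx', dt_sub_right] at hdt
  have hpos : 0 < dt (y - x) (y - x') := by
    rcases lt_or_eq_of_le (by omega : 0 ≤ dt (y - x) (y - x')) with h | h
    · exact h
    · exfalso
      exact oedge_d_ne e2 (eq_zero_of_dt_cr (oedge_d_ne e1) h0 h.symm)
  exact (oedge_dir_unique e1 e2 h0 hpos).1

/-- BUILD: construct an outgoing edge at a point all of whose companions lie
strictly inside a halfplane (except along the negative boundary ray). -/
lemma oedge_build {S : Finset (ℤ × ℤ)} {x : ℤ × ℤ} {d : ℤ × ℤ} (hx : x ∈ S)
    (hH : ∀ s ∈ S, s ≠ x → Hc d (s - x)) (hex : ∃ s ∈ S, s ≠ x) :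
    ∃ y, OEdge S x y := by
  classical
  set W : Finset (ℤ × ℤ) := (S.erase x).image (fun s => s - x) with hW
  have hWmem : ∀ w ∈ W, ∃ s ∈ S, s ≠ x ∧ s - x = w := by
    intro w hw
    simp only [hW, Finset.mem_image, Finset.mem_erase] at hw
    obtain ⟨s, ⟨hs1, hs2⟩, hs3⟩ := hw
    exact ⟨s, hs2, hs1, hs3⟩
  have hWne : W.Nonempty := by
    obtain ⟨s, hs, hsne⟩ := hex
    exact ⟨s - x, by simp only [hW, Finset.mem_image]; exact ⟨s, Finset.mem_erase.mpr ⟨hsne, hs⟩, rfl⟩⟩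
  have hWH : ∀ w ∈ W, Hc d w := by
    intro w hw
    obtain ⟨s, hs, hsne, rfl⟩ := hWmem w hw
    exact hH s hs hsne
  obtain ⟨w₀, hw₀W, hR⟩ := ang_min W hWne hWH
  have hw₀ne : w₀ ≠ 0 := hc_ne_zero (hWH w₀ hw₀W)
  have hw₀pos := dt_pos_self hw₀ne
  set Ray : Finset (ℤ × ℤ) := W.filter (fun w => cr w₀ w = 0) with hRay
  have hw₀Ray : w₀ ∈ Ray := Finset.mem_filter.mpr ⟨hw₀W, cr_self w₀⟩
  obtain ⟨wm, hwmRay, hwmMax⟩ := Finset.exists_max_image Ray (fun w => dt w₀ w) ⟨w₀, hw₀Ray⟩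
  have hwmW : wm ∈ W := (Finset.mem_filter.mp hwmRay).1
  have hwm0 : cr w₀ wm = 0 := (Finset.mem_filter.mp hwmRay).2
  have hwmne : wm ≠ 0 := hc_ne_zero (hWH wm hwmW)
  have hwmdtpos : 0 < dt w₀ wm := by
    rcases hR wm hwmW with h | ⟨_, h⟩
    · omega
    · exact h
  obtain ⟨ym, hymS, hymne, hymeq⟩ := hWmem wm hwmW
  refine ⟨ym, hx, hymS, (fun h => hymne h.symm), ?_, ?_⟩
  · -- side condition
    intro s hs
    have hda : ym - x = wm := hymeq
    rw [hda]
    by_cases hsx : s = x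
    · rw [hsx, sub_self, cr_zero_right]
    · have hsW : s - x ∈ W := by
        simp only [hW, Finset.mem_image]; exact ⟨s, Finset.mem_erase.mpr ⟨hsx, hs⟩, rfl⟩
      have hcr0 : 0 ≤ cr w₀ (s - x) := by
        rcases hR (s - x) hsW with h | ⟨h, _⟩; omega; omega
      have := scale_cr hwm0 (s - x)
      nlinarith
  · -- collinear condition
    intro s hs hcol
    have hda : ym - x = wm := hymeq
    rw [hda] at hcol ⊢
    by_cases hsx : s = x
    · rw [hsx, sub_self, dt_zero_right]
      exact ⟨le_refl 0, dt_nonneg_self wm⟩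
    · have hsW : s - x ∈ W := by
        simp only [hW, Finset.mem_image]; exact ⟨s, Finset.mem_erase.mpr ⟨hsx, hs⟩, rfl⟩
      have hsc : cr w₀ (s - x) = 0 := by
        have := scale_cr hwm0 (s - x)
        nlinarith
      have hsRay : s - x ∈ Ray := Finset.mem_filter.mpr ⟨hsW, hsc⟩
      have hsdtpos : 0 < dt w₀ (s - x) := by
        rcases hR (s - x) hsW with h | ⟨_, h⟩
        · omega
        · exact h
      have hmax := hwmMax (s - x) hsRay
      constructor
      · have := scale_dt hwm0 (s - x)
        nlinarith
      · have k1 := scale_dt hwm0 (s - x)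
        have k2 := scale_dt hwm0 wm
        nlinarith


noncomputable section
/-- the supporting functional of an (oriented) direction d : ℓ z = d.2 * z.1 - d.1 * z.2 -/
def lfun (d : ℤ × ℤ) : (ℝ × ℝ) →ₗ[ℝ] ℝ :=
  (d.2 : ℝ) • LinearMap.fst ℝ ℝ ℝ - (d.1 : ℝ) • LinearMap.snd ℝ ℝ ℝ

lemma lfun_apply (d : ℤ × ℤ) (z : ℝ × ℝ) : lfun d z = (d.2 : ℝ) * z.1 - (d.1 : ℝ) * z.2 := rfl

lemma lfun_e_sub (d : ℤ × ℤ) (s x : ℤ × ℤ) :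
    lfun d (e s) - lfun d (e x) = -(cr d (s - x) : ℝ) := by
  simp only [lfun_apply, e, cr, Prod.fst_sub, Prod.snd_sub]
  push_cast
  ring

/-- collinear points with parameter between 0 and 1 lie on the segment -/
lemma mem_seg_of_between {x y s : ℤ × ℤ} (hne : x ≠ y)
    (hcr : cr (y - x) (s - x) = 0) (h0 : 0 ≤ dt (y - x) (s - x))
    (h1 : dt (y - x) (s - x) ≤ dt (y - x) (y - x)) :
    e s ∈ segment ℝ (e x) (e y) := by
  set d := y - x with hd
  have hdne : d ≠ 0 := fun hc => hne (by have := sub_eq_zero.mp hc; exact this.symm)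
  have hdd : 0 < dt d d := dt_pos_self hdne
  set μ : ℝ := (dt d (s - x) : ℝ) / (dt d d : ℝ) with hμ
  have hddR : (0:ℝ) < (dt d d : ℝ) := by exact_mod_cast hdd
  have hμ0 : 0 ≤ μ := div_nonneg (by exact_mod_cast h0) (le_of_lt hddR)
  have hμ1 : μ ≤ 1 := by
    rw [hμ, div_le_one hddR]; exact_mod_cast h1
  rw [segment_eq_image']
  refine ⟨μ, ⟨hμ0, hμ1⟩, ?_⟩
  have k1 := scale1 hcr
  have k2 := scale2 hcr
  have hc1 : (e s).1 = (e x).1 + μ * ((e y).1 - (e x).1) := by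
    simp only [e]
    have : ((y:ℤ×ℤ).1 : ℝ) - (x.1:ℝ) = ((d.1 : ℤ) : ℝ) := by
      rw [hd]; push_cast [Prod.fst_sub]; ring
    rw [this, hμ]
    field_simp
    have : ((s.1:ℝ) - (x.1:ℝ)) * (dt d d : ℝ) = (dt d (s-x) : ℝ) * (d.1 : ℝ) := by
      have : ((s - x).1 : ℝ) = (s.1:ℝ) - (x.1:ℝ) := by push_cast [Prod.fst_sub]; ring
      rw [← this]
      exact_mod_cast (by linear_combination k1 : (s-x).1 * dt d d = dt d (s - x) * d.1)
    linarith [this]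
  have hc2 : (e s).2 = (e x).2 + μ * ((e y).2 - (e x).2) := by
    simp only [e]
    have : ((y:ℤ×ℤ).2 : ℝ) - (x.2:ℝ) = ((d.2 : ℤ) : ℝ) := by
      rw [hd]; push_cast [Prod.snd_sub]; ring
    rw [this, hμ]
    field_simp
    have : ((s.2:ℝ) - (x.2:ℝ)) * (dt d d : ℝ) = (dt d (s-x) : ℝ) * (d.2 : ℝ) := by
      have : ((s - x).2 : ℝ) = (s.2:ℝ) - (x.2:ℝ) := by push_cast [Prod.snd_sub]; ring
      rw [← this]
      exact_mod_cast (by linear_combination k2 : (s-x).2 * dt d d = dt d (s - x) * d.2)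
    linarith [this]
  exact Prod.ext hc1.symm hc2.symm

lemma oedge_isEdge {S : Finset (ℤ × ℤ)} {x y : ℤ × ℤ} (h : OEdge S x y) :
    IsEdge S x y := by
  obtain ⟨hxS, hyS, hne, hside, hcol⟩ := h
  set d := y - x with hd
  have hdne : d ≠ 0 := fun hc => hne (by have := sub_eq_zero.mp hc; exact this.symm)
  refine ⟨hne, hxS, hyS, lfun d, lfun d (e x), ?_, ?_⟩
  · -- bound on the hull
    intro z hz
    have hsub : e '' (S : Set (ℤ × ℤ)) ⊆ {w | lfun d w ≤ lfun d (e x)} := by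
      rintro _ ⟨s, hs, rfl⟩
      have := hside s hs
      have heq := lfun_e_sub d s x
      simp only [Set.mem_setOf_eq]
      have : (0:ℝ) ≤ (cr d (s - x) : ℝ) := by exact_mod_cast this
      linarith [heq, this]
    exact convexHull_min hsub (convex_halfSpace_le (LinearMap.isLinear _) _) hz
  · -- the face is exactly the segment
    apply Set.eq_of_subset_of_subset
    · -- face ⊆ segment
      rintro z ⟨hzhull, hzeq⟩
      classical
      set T : Finset (ℝ × ℝ) := S.image e with hT
      have hTcoe : (T : Set (ℝ × ℝ)) = e '' (S : Set (ℤ × ℤ)) := by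
        rw [hT, Finset.coe_image]
      rw [← hTcoe, Finset.convexHull_eq] at hzhull
      obtain ⟨w, hw0, hw1, hwz⟩ := hzhull
      -- each point of T has lfun ≤ c
      have hTle : ∀ t ∈ T, lfun d t ≤ lfun d (e x) := by
        intro t ht
        rw [hT, Finset.mem_image] at ht
        obtain ⟨s, hs, rfl⟩ := ht
        have := hside s hs
        have heq := lfun_e_sub d s x
        have : (0:ℝ) ≤ (cr d (s - x) : ℝ) := by exact_mod_cast this
        linarith [heq]
      -- centerMass = weighted sum
      have hsum : T.centerMass w id = ∑ t ∈ T, w t • t := by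
        exact Finset.centerMass_eq_of_sum_1 T id hw1
      have hlz : lfun d z = ∑ t ∈ T, w t * lfun d t := by
        rw [← hwz, hsum, map_sum]
        apply Finset.sum_congr rfl
        intro t _
        rw [map_smul]; rfl
      have hzero : ∑ t ∈ T, w t * (lfun d (e x) - lfun d t) = 0 := by
        have expand : ∀ t ∈ T, w t * (lfun d (e x) - lfun d t)
            = w t * lfun d (e x) - w t * lfun d t := fun t _ => by ring
        rw [Finset.sum_congr rfl expand, Finset.sum_sub_distrib, ← Finset.sum_mul, hw1]
        rw [← hlz, hzeq]; ring
      have key : ∀ t ∈ T, w t * (lfun d (e x) - lfun d t) = 0 := by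
        intro t ht
        refine (Finset.sum_eq_zero_iff_of_nonneg ?_).mp hzero t ht
        intro i hi
        exact mul_nonneg (hw0 i hi) (by linarith [hTle i hi])
      set T' : Finset (ℝ × ℝ) := T.filter (fun t => w t ≠ 0) with hT'
      have hseg' : ∀ t ∈ T', t ∈ segment ℝ (e x) (e y) := by
        intro t ht
        rw [hT', Finset.mem_filter] at ht
        obtain ⟨htT, htw⟩ := ht
        have hteq : lfun d t = lfun d (e x) := by
          have := key t htT
          rcases mul_eq_zero.mp this with h | h
          · exact absurd h htw
          · linarith
        rw [hT, Finset.mem_image] at htT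
        obtain ⟨s, hs, rfl⟩ := htT
        have hcr0 : cr d (s - x) = 0 := by
          have := lfun_e_sub d s x
          rw [hteq] at this
          have : (cr d (s - x) : ℝ) = 0 := by linarith
          exact_mod_cast this
        obtain ⟨hlow, hhigh⟩ := hcol s hs hcr0
        exact mem_seg_of_between hne hcr0 hlow hhigh
      have hz' : T'.centerMass w id = z := by
        rw [hT', Finset.centerMass_filter_ne_zero, hwz]
      have hsum' : (0:ℝ) < ∑ t ∈ T', w t := by
        rw [hT', Finset.sum_filter_ne_zero, hw1]; exact one_pos
      have hmem := Finset.centerMass_mem_convexHull T'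
        (fun i hi => hw0 i (Finset.mem_filter.mp hi).1) hsum'
        (fun i hi => hseg' i hi)
      rw [(convex_segment (e x) (e y)).convexHull_eq] at hmem
      rw [← hz']
      exact hmem
    · -- segment ⊆ face
      intro z hz
      simp only [Set.mem_setOf_eq]
      have hxhull : e x ∈ convexHull ℝ (e '' (S : Set (ℤ × ℤ))) :=
        subset_convexHull ℝ _ ⟨x, hxS, rfl⟩
      have hyhull : e y ∈ convexHull ℝ (e '' (S : Set (ℤ × ℤ))) :=
        subset_convexHull ℝ _ ⟨y, hyS, rfl⟩
      have hmem : z ∈ convexHull ℝ (e '' (S : Set (ℤ × ℤ))) :=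
        (convex_convexHull ℝ _).segment_subset hxhull hyhull hz
      refine ⟨hmem, ?_⟩
      rw [segment_eq_image'] at hz
      obtain ⟨θ, hθ, rfl⟩ := hz
      have hly : lfun d (e y) = lfun d (e x) := by
        have := lfun_e_sub d y x
        rw [← hd, cr_self] at this
        push_cast at this
        linarith
      have : lfun d (e x + θ • (e y - e x)) = lfun d (e x) + θ * (lfun d (e y) - lfun d (e x)) := by
        rw [map_add, map_smul, map_sub]; rfl
      rw [this, hly]; ring


end



lemma cr_split (a s p w : ℤ × ℤ) : cr a (s - w) = cr a (s - p) + cr a (p - w) := by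
  simp only [cr, Prod.fst_sub, Prod.snd_sub]; ring

/-- at a vertex of the edge cycle, a local max of a linear functional is a global max -/
lemma oedge_cone {S : Finset (ℤ × ℤ)} {w p w' s : ℤ × ℤ} {a : ℤ × ℤ}
    (e1 : OEdge S w p) (e2 : OEdge S p w') (hs : s ∈ S)
    (h4 : dt a w ≤ dt a p) (h5 : dt a w' ≤ dt a p) : dt a s ≤ dt a p := by
  have hdinne : p - w ≠ 0 := oedge_d_ne e1
  have hdoutne : w' - p ≠ 0 := oedge_d_ne e2
  have h1 : 0 ≤ cr (p - w) (s - p) := by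
    have A := e1.2.2.2.1 s hs
    have B := cr_split (p - w) s p w
    have C := cr_self (p - w)
    omega
  have h2 : 0 ≤ cr (w' - p) (s - p) := e2.2.2.2.1 s hs
  have h3 : 0 ≤ cr (p - w) (w' - p) := by
    have A := e1.2.2.2.1 w' e2.2.1
    have B := cr_split (p - w) w' p w
    have C := cr_self (p - w)
    omega
  have h4' : 0 ≤ dt a (p - w) := by have := dt_sub_right a p w; omega
  have h5' : dt a (w' - p) ≤ 0 := by have := dt_sub_right a w' p; omega
  have goal' : dt a (s - p) ≤ 0 → dt a s ≤ dt a p := by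
    intro h; have := dt_sub_right a s p; omega
  apply goal'
  rcases lt_or_eq_of_le h3 with hcase | hcase
  · -- generic cone
    have key := cramer_dt (p - w) (w' - p) (s - p) a
    have hanti := cr_anticomm' (s - p) (w' - p)
    nlinarith
  · -- parallel in/out
    have hpar : cr (p - w) (w' - p) = 0 := hcase.symm
    have hdtio : dt (p - w) (w' - p) ≠ 0 :=
      fun h => hdoutne (eq_zero_of_dt_cr hdinne hpar h)
    rcases lt_or_gt_of_ne hdtio with hneg | hpos
    · -- antiparallel
      have hk1 := scale_cr hpar (s - p)
      have hdd := dt_pos_self hdinne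
      have hcrdout : cr (w' - p) (s - p) = 0 := by nlinarith
      have hcrdin : cr (p - w) (s - p) = 0 := by
        have hz : dt (p - w) (w' - p) * cr (p - w) (s - p) = 0 := by
          rw [← hk1, hcrdout]; ring
        exact (mul_eq_zero.mp hz).resolve_left hdtio
      have hcoll := (e2.2.2.2.2 s hs hcrdout).1
      have hk2 := scale_dt hpar (s - p)
      have hdint : dt (p - w) (s - p) ≤ 0 := by nlinarith
      have hk3 := scale_dt hcrdin a
      have hc1 := dt_comm' (p - w) a
      have hc2 := dt_comm' (s - p) a
      nlinarith
    · -- positively parallel: impossible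
      exfalso
      exact e1.2.2.1 (oedge_dir_unique e1 e2 hpar hpos).1

lemma box_bound {A B P Q R : ℤ} (hR : 0 ≤ R)
    (hP1 : -R ≤ P) (hP2 : P ≤ R) (hQ1 : -R ≤ Q) (hQ2 : Q ≤ R)
    (key : A * A + B * B ≤ A * P + B * Q) :
    -(2*R) ≤ A ∧ A ≤ 2*R ∧ -(2*R) ≤ B ∧ B ≤ 2*R := by
  have hAP : A * P ≤ |A| * R := by
    calc A * P ≤ |A * P| := le_abs_self _
    _ = |A| * |P| := abs_mul _ _
    _ ≤ |A| * R := mul_le_mul_of_nonneg_left (abs_le.mpr ⟨hP1, hP2⟩) (abs_nonneg _)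
  have hBQ : B * Q ≤ |B| * R := by
    calc B * Q ≤ |B * Q| := le_abs_self _
    _ = |B| * |Q| := abs_mul _ _
    _ ≤ |B| * R := mul_le_mul_of_nonneg_left (abs_le.mpr ⟨hQ1, hQ2⟩) (abs_nonneg _)
  have h1 : |A| * |A| + |B| * |B| ≤ |A| * R + |B| * R := by
    have e1 := abs_mul_abs_self A
    have e2 := abs_mul_abs_self B
    linarith
  have hA0 := abs_nonneg A
  have hB0 := abs_nonneg B
  have hA : |A| ≤ 2 * R := by
    nlinarith [mul_self_nonneg (2 * |B| - R)]
  have hB : |B| ≤ 2 * R := by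
    nlinarith [mul_self_nonneg (2 * |A| - R)]
  have := abs_le.mp hA
  have := abs_le.mp hB
  exact ⟨by omega, by omega, by omega, by omega⟩

set_option maxHeartbeats 1000000 in
/-- Fix nonzero `v₁, …, v_m ∈ ℤ²` and `n ∈ ℕ`. There exists `N ∈ ℕ` such that
any finite convex `S ⊂ ℤ²` with at least `N` lattice points, all of whose
boundary edges are parallel to one of the `vᵢ`, has a boundary edge containing
at least `n` lattice points. -/
theorem statement9 (m : ℕ) (v : Fin m → ℤ × ℤ) (hv : ∀ i, v i ≠ 0) (n : ℕ) :
    ∃ N : ℕ, ∀ S : Finset (ℤ × ℤ), IsConvexSet S → N ≤ S.card →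
      (∀ p q : ℤ × ℤ, IsEdge S p q →
        ∃ i : Fin m, (q.1 - p.1) * (v i).2 = (q.2 - p.2) * (v i).1) →
      ∃ p q : ℤ × ℤ, IsEdge S p q ∧ n ≤ (edgePts S p q).card := by
  classical
  set Mi : ℕ := Finset.univ.sup (fun i : Fin m => (v i).1.natAbs ⊔ (v i).2.natAbs) with hMi
  set Cn : ℕ := 2 * n * (Mi + 1) + 1 with hCn
  set Rn : ℕ := 2 * m * Cn with hRn
  refine ⟨(4 * Rn + 2)^2, ?_⟩
  intro S hconv hcard hdir
  by_contra hcon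
  push_neg at hcon
  -- `hcon : ∀ p q, IsEdge S p q → (edgePts S p q).card < n`
  have hcard2 : 2 ≤ S.card := by
    refine le_trans ?_ hcard
    calc 2 ≤ 4 * Rn + 2 := by omega
    _ ≤ (4 * Rn + 2)^2 := Nat.le_self_pow (by norm_num) _
  have hSne : S.Nonempty := Finset.card_pos.mp (by omega)
  -- every oriented edge is short
  have eshort : ∀ x y : ℤ × ℤ, OEdge S x y →
      (y - x).1.natAbs ≤ Cn ∧ (y - x).2.natAbs ≤ Cn := by
    intro x y hxy
    have he := oedge_isEdge hxy
    obtain ⟨i, hi⟩ := hdir x y he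
    have hicr : cr (y - x) (v i) = 0 := by
      simp only [cr, Prod.fst_sub, Prod.snd_sub]; linarith [hi]
    have hdne : y - x ≠ 0 := oedge_d_ne hxy
    have hdt0 : dt (y - x) (v i) ≠ 0 := fun h => hv i (eq_zero_of_dt_cr hdne hicr h)
    set vi : ℤ × ℤ := if 0 < dt (y - x) (v i) then v i else -(v i) with hvi
    have hcr' : cr (y - x) vi = 0 := by
      rw [hvi]; split
      · exact hicr
      · rw [cr_neg_right]; omega
    have hdt' : 0 < dt (y - x) vi := by
      rw [hvi]; split
      · assumption
      · rename_i hneg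
        rw [dt_neg_right]
        omega
    have hviM : vi.1.natAbs ≤ Mi ∧ vi.2.natAbs ≤ Mi := by
      have hle := Finset.le_sup (f := fun i : Fin m => (v i).1.natAbs ⊔ (v i).2.natAbs)
        (Finset.mem_univ i)
      rw [← hMi] at hle
      have hle1 : (v i).1.natAbs ≤ Mi := le_trans le_sup_left hle
      have hle2 : (v i).2.natAbs ≤ Mi := le_trans le_sup_right hle
      constructor
      · rw [hvi]; split
        · exact hle1
        · simpa [Int.natAbs_neg] using hle1
      · rw [hvi]; split
        · exact hle2
        · simpa [Int.natAbs_neg] using hle2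
    by_cases hall : ∀ j : ℕ, j < n → (j : ℤ) * dt (y - x) vi ≤ dt (y - x) (y - x)
    · exfalso
      have hxny : x ≠ y := hxy.2.2.1
      have hmem : ∀ j : ℕ, j < n → (x + (j : ℤ) • vi) ∈ edgePts S x y := by
        intro j hj
        have hsx : (x + (j : ℤ) • vi) - x = (j : ℤ) • vi := add_sub_cancel_left x _
        have hcrj : cr (y - x) ((x + (j : ℤ) • vi) - x) = 0 := by
          rw [hsx]
          simp only [cr, Prod.smul_fst, Prod.smul_snd, smul_eq_mul]
          simp only [cr] at hcr'
          linear_combination (j : ℤ) * hcr'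
        have hdtj : dt (y - x) ((x + (j : ℤ) • vi) - x) = (j : ℤ) * dt (y - x) vi := by
          rw [hsx]
          simp only [dt, Prod.smul_fst, Prod.smul_snd, smul_eq_mul]; ring
        have hseg := mem_seg_of_between hxny hcrj
          (by rw [hdtj]; positivity) (by rw [hdtj]; exact hall j hj)
        have hmemS : x + (j : ℤ) • vi ∈ S := by
          apply hconv
          have hxh : e x ∈ convexHull ℝ (e '' (S : Set (ℤ × ℤ))) :=
            subset_convexHull ℝ _ ⟨x, hxy.1, rfl⟩
          have hyh : e y ∈ convexHull ℝ (e '' (S : Set (ℤ × ℤ))) :=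
            subset_convexHull ℝ _ ⟨y, hxy.2.1, rfl⟩
          exact (convex_convexHull ℝ _).segment_subset hxh hyh hseg
        exact Finset.mem_filter.mpr ⟨hmemS, hseg⟩
      have hviNe : vi ≠ 0 := fun h => by rw [h] at hdt'; simp [dt] at hdt'
      have hn : n ≤ (edgePts S x y).card := by
        have := Finset.card_le_card_of_injOn (fun j : ℕ => x + (j : ℤ) • vi)
          (fun j hj => hmem j (Finset.mem_range.mp hj)) ?_
        · simpa using this
        · intro j hj j' hj' heq
          simp only at heq
          have : (j : ℤ) • vi = (j' : ℤ) • vi := by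
            have := add_left_cancel heq; exact this
          have hj12 : (j:ℤ) * vi.1 = (j':ℤ) * vi.1 ∧ (j:ℤ) * vi.2 = (j':ℤ) * vi.2 := by
            constructor
            · have := congrArg Prod.fst this
              simpa [Prod.smul_fst, smul_eq_mul] using this
            · have := congrArg Prod.snd this
              simpa [Prod.smul_snd, smul_eq_mul] using this
          have hvine : vi.1 ≠ 0 ∨ vi.2 ≠ 0 := by
            by_contra hn; push_neg at hn; exact hviNe (Prod.ext hn.1 hn.2)
          have : (j : ℤ) = (j' : ℤ) := by
            rcases hvine with h | h
            · exact mul_right_cancel₀ h hj12.1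
            · exact mul_right_cancel₀ h hj12.2
          exact_mod_cast this
      exact absurd (hcon x y he) (not_lt.mpr hn)
    · push_neg at hall
      obtain ⟨j, hjn, hjgt⟩ := hall
      -- dt d d < n * dt d vi, with dt d vi ≤ (|d1|+|d2|) * Mi
      have hdd := dt_pos_self hdne
      set A : ℤ := ((y - x).1.natAbs : ℤ) with hA
      set B : ℤ := ((y - x).2.natAbs : ℤ) with hB
      have hA0 : 0 ≤ A := by positivity
      have hB0 : 0 ≤ B := by positivity
      have hAB : dt (y - x) (y - x) = A * A + B * B := by
        simp only [dt, hA, hB, Int.natAbs_mul_self']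
      have k1 : (y - x).1 * vi.1 ≤ A * ((Mi : ℤ) + 1) := by
        have h1 : (vi.1.natAbs : ℤ) ≤ (Mi : ℤ) + 1 := by have := hviM.1; omega
        have h2 : (y - x).1 * vi.1 ≤ A * (vi.1.natAbs : ℤ) := by
          rw [hA, ← Nat.cast_mul, ← Int.natAbs_mul]
          exact Int.le_natAbs
        exact le_trans h2 (mul_le_mul_of_nonneg_left h1 hA0)
      have k2 : (y - x).2 * vi.2 ≤ B * ((Mi : ℤ) + 1) := by
        have h1 : (vi.2.natAbs : ℤ) ≤ (Mi : ℤ) + 1 := by have := hviM.2; omega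
        have h2 : (y - x).2 * vi.2 ≤ B * (vi.2.natAbs : ℤ) := by
          rw [hB, ← Nat.cast_mul, ← Int.natAbs_mul]
          exact Int.le_natAbs
        exact le_trans h2 (mul_le_mul_of_nonneg_left h1 hB0)
      have hdtvi : dt (y - x) vi ≤ (A + B) * ((Mi : ℤ) + 1) := by
        simp only [dt]; nlinarith [k1, k2]
      have hj' : (j : ℤ) < (n : ℤ) := by exact_mod_cast hjn
      have hj0 : (0 : ℤ) ≤ (j : ℤ) := by positivity
      have hXpos : 0 < (A + B) * ((Mi : ℤ) + 1) := lt_of_lt_of_le hdt' hdtvi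
      have hjX := mul_le_mul_of_nonneg_left hdtvi hj0
      have hnX := mul_lt_mul_of_pos_right hj' hXpos
      have hApos : 0 < A + B := by nlinarith [hXpos]
      set Y : ℤ := (n : ℤ) * ((Mi : ℤ) + 1) with hY
      have hlt : A * A + B * B < (A + B) * Y := by
        have hr : (n : ℤ) * ((A + B) * ((Mi : ℤ) + 1)) = (A + B) * Y := by rw [hY]; ring
        linarith [hjgt, hAB, hjX, hnX, hr]
      have hsum : A + B < 2 * Y := by
        nlinarith [mul_self_nonneg (A - B), hApos, hlt]
      have hCnZ : (Cn : ℤ) = 2 * Y + 1 := by rw [hY, hCn]; push_cast; ring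
      constructor <;> omega
  -- lexicographically maximal point z
  obtain ⟨a1, ha1S, ha1max⟩ := Finset.exists_max_image S (fun p => p.1) hSne
  have hS1ne : (S.filter (fun p => p.1 = a1.1)).Nonempty :=
    ⟨a1, Finset.mem_filter.mpr ⟨ha1S, rfl⟩⟩
  obtain ⟨z, hzS1, hzmax⟩ := Finset.exists_max_image _ (fun p => p.2) hS1ne
  have hzS : z ∈ S := (Finset.mem_filter.mp hzS1).1
  have hz1 : z.1 = a1.1 := (Finset.mem_filter.mp hzS1).2
  have hlex : ∀ s ∈ S, s ≠ z → Hc (0, 1) (s - z) := by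
    intro s hs hne
    have h1 : s.1 ≤ z.1 := by rw [hz1]; exact ha1max s hs
    have hcrv : cr (0, 1) (s - z) = -(s.1 - z.1) := by
      simp only [cr, Prod.fst_sub, Prod.snd_sub]; ring
    have hdtv : dt (0, 1) (s - z) = s.2 - z.2 := by
      simp only [dt, Prod.fst_sub, Prod.snd_sub]; ring
    rcases lt_or_eq_of_le h1 with h | h
    · left; rw [hcrv]; omega
    · right
      have hsS1 : s ∈ S.filter (fun p => p.1 = a1.1) :=
        Finset.mem_filter.mpr ⟨hs, by rw [← hz1, h]⟩
      have h2 : s.2 ≤ z.2 := hzmax s hsS1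
      have h2' : s.2 ≠ z.2 := fun hh => hne (Prod.ext h hh)
      exact ⟨by rw [hcrv]; omega, by rw [hdtv]; omega⟩
  have hex : ∃ s ∈ S, s ≠ z := by
    obtain ⟨b, hb, hbne⟩ := Finset.exists_mem_ne (s := S) (by omega) z
    exact ⟨b, hb, hbne⟩
  obtain ⟨y₀, hy₀⟩ := oedge_build hzS hlex hex
  -- next-edge step
  have hterm : ∀ x y : ℤ × ℤ, OEdge S x y → ∃ y', OEdge S y y' := by
    intro x y hxy
    apply oedge_build (d := y - x) hxy.2.1 ?_ ⟨x, hxy.1, hxy.2.2.1⟩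
    intro s hs hne
    have hside := hxy.2.2.2.1 s hs
    have hsplit := cr_split (y - x) s y x
    have hself := cr_self (y - x)
    have hges : 0 ≤ cr (y - x) (s - y) := by omega
    rcases lt_or_eq_of_le hges with h | h
    · left; exact h
    · right
      refine ⟨h.symm, ?_⟩
      have hcr0 : cr (y - x) (s - x) = 0 := by omega
      have hcol := hxy.2.2.2.2 s hs hcr0
      have hdsplit := dt_split (y - x) s y x
      have hne0 : dt (y - x) (s - y) ≠ 0 := by
        intro hzz
        apply hne
        have := eq_zero_of_dt_cr (oedge_d_ne hxy) h.symm hzz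
        exact sub_eq_zero.mp this
      omega
  have hstep : ∀ p : {q : ℤ × ℤ // ∃ x, OEdge S x q},
      ∃ r : {q : ℤ × ℤ // ∃ x, OEdge S x q}, OEdge S p.1 r.1 := by
    rintro ⟨p, x, hx⟩
    obtain ⟨y', hy'⟩ := hterm x p hx
    exact ⟨⟨y', p, hy'⟩, hy'⟩
  choose nxt hnxt using hstep
  let f : ℕ → {q : ℤ × ℤ // ∃ x, OEdge S x q} := fun i => nxt^[i] ⟨y₀, z, hy₀⟩
  let g : ℕ → ℤ × ℤ := fun i => Nat.rec z (fun i _ => (f i).1) i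
  have hg0 : g 0 = z := rfl
  have hgs : ∀ i, g (i + 1) = (f i).1 := fun i => rfl
  have hedge : ∀ i, OEdge S (g i) (g (i + 1)) := by
    intro i
    cases i with
    | zero => exact hy₀
    | succ i =>
      have h1 : f (i + 1) = nxt (f i) := Function.iterate_succ_apply' nxt i _
      have h2 := hnxt (f i)
      rw [hgs, hgs, h1]
      exact h2
  have hgS : ∀ i, g i ∈ S := fun i => (hedge i).1
  -- pigeonhole: the walk returns
  have hrep : ∃ jj : ℕ, ∃ i, i < jj ∧ g i = g jj := by
    obtain ⟨i, hi, j, hj, hne, heq⟩ := Finset.exists_ne_map_eq_of_card_lt_of_maps_to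
      (s := Finset.range (S.card + 1)) (t := S) (by simp) (fun i _ => hgS i)
    rcases lt_or_gt_of_ne hne with h | h
    · exact ⟨j, i, h, heq⟩
    · exact ⟨i, j, h, heq.symm⟩
  haveI hdec : DecidablePred fun jj => ∃ i, i < jj ∧ g i = g jj := Classical.decPred _
  set k := Nat.find hrep with hkdef
  obtain ⟨i0, hi0k, hgi0⟩ := Nat.find_spec hrep
  have hkmin : ∀ j', j' < k → ¬ ∃ i, i < j' ∧ g i = g j' :=
    fun j' hj' => Nat.find_min hrep hj'
  have hk0 : 0 < k := by omega
  have hgk : g k = g 0 := by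
    rcases Nat.eq_zero_or_pos i0 with rfl | hipos
    · exact hgi0.symm
    · exfalso
      have e1 : OEdge S (g (i0 - 1)) (g i0) := by
        have h := hedge (i0 - 1)
        have he : i0 - 1 + 1 = i0 := by omega
        rwa [he] at h
      have e2 : OEdge S (g (k - 1)) (g i0) := by
        have h := hedge (k - 1)
        have he : k - 1 + 1 = k := by omega
        rw [he] at h
        rwa [← hgi0] at h
      have heq := oedge_in_unique e1 e2
      exact hkmin (k - 1) (by omega) ⟨i0 - 1, by omega, heq⟩
  have hdist : ∀ i j, i < j → j < k → g i ≠ g j :=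
    fun i j hij hjk heq => hkmin j hjk ⟨i, hij, heq⟩
  -- at most 2m edges
  have hkm : k ≤ 2 * m := by
    have hmap : ∀ i : ℕ, ∃ t : Fin m, cr (g (i+1) - g i) (v t) = 0 := by
      intro i
      obtain ⟨idx, hidx⟩ := hdir _ _ (oedge_isEdge (hedge i))
      refine ⟨idx, ?_⟩
      simp only [cr, Prod.fst_sub, Prod.snd_sub]; linarith [hidx]
    choose F hF using hmap
    set G : ℕ → Fin m × Bool :=
      fun i => (F i, decide (0 < dt (g (i+1) - g i) (v (F i)))) with hGdef
    have hinj : Set.InjOn G (Finset.range k) := by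
      intro i hi' j hj' heq
      have hik : i < k := by simpa using hi'
      have hjk : j < k := by simpa using hj'
      have hFij : F i = F j := congrArg Prod.fst heq
      have hBij : decide (0 < dt (g (i+1) - g i) (v (F i)))
          = decide (0 < dt (g (j+1) - g j) (v (F j))) := congrArg Prod.snd heq
      rw [← hFij] at hBij
      have hsame : (0 < dt (g (i+1) - g i) (v (F i)))
          ↔ (0 < dt (g (j+1) - g j) (v (F i))) := by
        constructor <;> intro h
        · have := (decide_eq_decide).mp hBij; tauto
        · have := (decide_eq_decide).mp hBij; tauto
      have hcri : cr (g (i+1) - g i) (v (F i)) = 0 := hF i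
      have hcrj : cr (g (j+1) - g j) (v (F i)) = 0 := by rw [hFij]; exact hF j
      have hcc : cr (g (i+1) - g i) (g (j+1) - g j) = 0 :=
        cr_trans (hv (F i)) hcri hcrj
      have hdti : dt (g (i+1) - g i) (v (F i)) ≠ 0 :=
        fun h => hv (F i) (eq_zero_of_dt_cr (oedge_d_ne (hedge i)) hcri h)
      have hdtj : dt (g (j+1) - g j) (v (F i)) ≠ 0 :=
        fun h => hv (F i) (eq_zero_of_dt_cr (oedge_d_ne (hedge j)) hcrj h)
      have hww := dt_pos_self (hv (F i))
      have hprod : 0 < dt (g (i+1) - g i) (v (F i)) * dt (g (j+1) - g j) (v (F i)) := by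
        rcases lt_or_gt_of_ne hdti with h | h
        · have h2 : dt (g (j+1) - g j) (v (F i)) < 0 := by
            rcases lt_or_gt_of_ne hdtj with h2 | h2
            · exact h2
            · exfalso; have := hsame.mpr h2; omega
          exact mul_pos_of_neg_of_neg h h2
        · have h2 : 0 < dt (g (j+1) - g j) (v (F i)) := hsame.mp h
          exact mul_pos h h2
      have hpos : 0 < dt (g (i+1) - g i) (g (j+1) - g j) := by
        have hb := binet (g (i+1) - g i) (v (F i)) (g (j+1) - g j) (v (F i))
        rw [hcri, hcrj] at hb
        have hcm2 := dt_comm' (v (F i)) (g (j+1) - g j)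
        rw [hcm2] at hb
        have hb' : dt (g (i+1) - g i) (g (j+1) - g j) * dt (v (F i)) (v (F i))
            = dt (g (i+1) - g i) (v (F i)) * dt (g (j+1) - g j) (v (F i)) := by
          linarith [hb]
        nlinarith [hb', hprod, hww]
      have hgij := (oedge_dir_unique (hedge i) (hedge j) hcc hpos).1
      by_contra hne
      rcases lt_or_gt_of_ne hne with h | h
      · exact hdist i j h hjk hgij
      · exact hdist j i h hik hgij.symm
    have hcard3 := Finset.card_le_card_of_injOn G
      (fun a _ => Finset.mem_univ (G a)) hinj
    rw [Finset.card_range, Finset.card_univ, Fintype.card_prod,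
      Fintype.card_fin, Fintype.card_bool] at hcard3
    omega
  -- telescoping length bound
  have hlen : ∀ i : ℕ, (g i - g 0).1.natAbs ≤ i * Cn ∧ (g i - g 0).2.natAbs ≤ i * Cn := by
    intro i
    induction i with
    | zero => simp
    | succ i ih =>
      have hsh := eshort _ _ (hedge i)
      have hd1 : (g (i+1) - g 0).1 = (g (i+1) - g i).1 + (g i - g 0).1 := by
        simp only [Prod.fst_sub]; ring
      have hd2 : (g (i+1) - g 0).2 = (g (i+1) - g i).2 + (g i - g 0).2 := by
        simp only [Prod.snd_sub]; ring
      have hmul : (i + 1) * Cn = i * Cn + Cn := by ring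
      obtain ⟨ih1, ih2⟩ := ih
      obtain ⟨hs1, hs2⟩ := hsh
      constructor
      · omega
      · omega
  -- local max is global max
  have hmaxS : ∀ s ∈ S, ∀ a : ℤ × ℤ, ∃ i, i < k ∧ dt a s ≤ dt a (g i) := by
    intro s hs a
    obtain ⟨istar, histar, himax⟩ := Finset.exists_max_image (Finset.range k)
      (fun i => dt a (g i)) ⟨0, Finset.mem_range.mpr hk0⟩
    have histar' : istar < k := Finset.mem_range.mp histar
    refine ⟨istar, histar', ?_⟩
    have hout : dt a (g (istar + 1)) ≤ dt a (g istar) := by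
      rcases Nat.lt_or_ge (istar + 1) k with h | h
      · exact himax _ (Finset.mem_range.mpr h)
      · have hek : istar + 1 = k := by omega
        rw [hek, hgk]
        exact himax 0 (Finset.mem_range.mpr hk0)
    rcases Nat.eq_zero_or_pos istar with rfl | hpos
    · have e1 : OEdge S (g (k - 1)) (g 0) := by
        have h := hedge (k - 1)
        have he : k - 1 + 1 = k := by omega
        rwa [he, hgk] at h
      have h4 : dt a (g (k - 1)) ≤ dt a (g 0) :=
        himax _ (Finset.mem_range.mpr (by omega))
      exact oedge_cone e1 (hedge 0) hs h4 hout
    · have e1 : OEdge S (g (istar - 1)) (g istar) := by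
        have h := hedge (istar - 1)
        have he : istar - 1 + 1 = istar := by omega
        rwa [he] at h
      have h4 : dt a (g (istar - 1)) ≤ dt a (g istar) :=
        himax _ (Finset.mem_range.mpr (by omega))
      exact oedge_cone e1 (hedge istar) hs h4 hout
  -- every point of S is in a box around z
  have hnear : ∀ s ∈ S, (s - z).1.natAbs ≤ 2 * Rn ∧ (s - z).2.natAbs ≤ 2 * Rn := by
    intro s hs
    obtain ⟨i, hik, hle⟩ := hmaxS s hs (s - z)
    have h2 : dt (s - z) (s - z) ≤ dt (s - z) (g i - g 0) := by
      have e1 := dt_sub_right (s - z) s z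
      have e2 := dt_sub_right (s - z) (g i) (g 0)
      have e3 : dt (s - z) (g 0) = dt (s - z) z := by rw [hg0]
      omega
    have hb := hlen i
    have hiC : i * Cn ≤ Rn := by
      calc i * Cn ≤ (2 * m) * Cn := Nat.mul_le_mul_right _ (by omega)
      _ = Rn := by rw [hRn]
    have hdt1 : dt (s - z) (s - z) = (s-z).1 * (s-z).1 + (s-z).2 * (s-z).2 := rfl
    have hdt2 : dt (s - z) (g i - g 0) =
        (s-z).1 * (g i - g 0).1 + (s-z).2 * (g i - g 0).2 := rfl
    have key : (s-z).1 * (s-z).1 + (s-z).2 * (s-z).2 ≤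
        (s-z).1 * (g i - g 0).1 + (s-z).2 * (g i - g 0).2 := by
      rw [← hdt1, ← hdt2]; exact h2
    have hRz : (0:ℤ) ≤ (Rn : ℤ) := by positivity
    have hP1 : -(Rn:ℤ) ≤ (g i - g 0).1 := by omega
    have hP2 : (g i - g 0).1 ≤ (Rn:ℤ) := by omega
    have hQ1 : -(Rn:ℤ) ≤ (g i - g 0).2 := by omega
    have hQ2 : (g i - g 0).2 ≤ (Rn:ℤ) := by omega
    have := box_bound hRz hP1 hP2 hQ1 hQ2 key
    constructor <;> omega
  -- the box
  have hsub : S ⊆ Finset.Icc (z.1 - 2*(Rn:ℤ)) (z.1 + 2*(Rn:ℤ)) ×ˢ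
      Finset.Icc (z.2 - 2*(Rn:ℤ)) (z.2 + 2*(Rn:ℤ)) := by
    intro s hs
    have := hnear s hs
    have e1 : (s - z).1 = s.1 - z.1 := rfl
    have e2 : (s - z).2 = s.2 - z.2 := rfl
    rw [Finset.mem_product, Finset.mem_Icc, Finset.mem_Icc]
    omega
  have hcard4 := Finset.card_le_card hsub
  rw [Finset.card_product, Int.card_Icc, Int.card_Icc] at hcard4
  have hIcc : (z.1 + 2*(Rn:ℤ) + 1 - (z.1 - 2*(Rn:ℤ))).toNat = 4 * Rn + 1 := by omega
  have hIcc2 : (z.2 + 2*(Rn:ℤ) + 1 - (z.2 - 2*(Rn:ℤ))).toNat = 4 * Rn + 1 := by omega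
  rw [hIcc, hIcc2] at hcard4
  have : (4 * Rn + 2)^2 ≤ (4 * Rn + 1) * (4 * Rn + 1) := le_trans hcard hcard4
  nlinarith

end Nivat
end
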